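/- arXiv:2405.06165 — 3 statements merged into one kernel-verified Lean document; each statement's English description precedes it below -/
import Mathlib

section
/- (DoS attack only: ᾱ = 0, no deception signal.) Assume: μ > 1, 0 < ρ_s < 1, ρ_u > 0, β̄ ∈ [0,1], c := β̄(1+ρ_u)/(1−ρ_s) < 1, and there exist symmetric positive definite matrices P_p ∈ ℝ^{2n×2n} (p = 1,…,m) such that Π_p ⪯ 0 and Ψ_p ⪯ 0 for all p, and Ω_{pq} ⪯ 0 and P_p ⪯ μ P_q for all p ≠ q. Set μ̄ = μ(2−β̄−c)/(1−c) and assume the switching signal σ has dwell time τ_d with μ̄(1−ρ_s)^{τ_d} < 1. Then the closed-loop switched system subject to DoS attack is asymptotically stable in the mean square sense: lim_{k→∞} E‖x̃(k)‖² = 0. -/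
open Matrix MeasureTheory ProbabilityTheory Filter

noncomputable section

/-- `M ⪯ 0`: the symmetric part of `M` is negative semidefinite. -/
def SymNegSemidef {l : Type*} [Fintype l] (M : Matrix l l ℝ) : Prop :=
  (-(((1 : ℝ) / 2) • (M + Mᵀ))).PosSemidef

/-- A deterministic switching signal `σ` has dwell time `τ`: any two distinct
switching instants (times `k+1` with `σ (k+1) ≠ σ k`) are at least `τ` apart. -/
def HasDwellTime {m : ℕ} (σ : ℕ → Fin m) (τ : ℕ) : Prop :=
  ∀ j k : ℕ, j < k → σ (j + 1) ≠ σ j → σ (k + 1) ≠ σ k → j + τ ≤ k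

/-- `A¹_p = [[A + (1-β̄)BK, β̄BK],[(1-β̄)I, β̄I]]` (DoS-only case). -/
def blkA1d (n : ℕ) (A BK : Matrix (Fin n) (Fin n) ℝ) (bB : ℝ) :
    Matrix (Fin n ⊕ Fin n) (Fin n ⊕ Fin n) ℝ :=
  fromBlocks (A + (1 - bB) • BK) (bB • BK)
    ((1 - bB) • (1 : Matrix (Fin n) (Fin n) ℝ)) (bB • (1 : Matrix (Fin n) (Fin n) ℝ))

/-- `A² = [[0, BK],[0, I]]`. -/
def blkA2 (n : ℕ) (BK : Matrix (Fin n) (Fin n) ℝ) :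
    Matrix (Fin n ⊕ Fin n) (Fin n ⊕ Fin n) ℝ :=
  fromBlocks 0 BK 0 (1 : Matrix (Fin n) (Fin n) ℝ)

/-- `A³ = [[BK, 0],[I, 0]]`. -/
def blkA3 (n : ℕ) (BK : Matrix (Fin n) (Fin n) ℝ) :
    Matrix (Fin n ⊕ Fin n) (Fin n ⊕ Fin n) ℝ :=
  fromBlocks BK 0 (1 : Matrix (Fin n) (Fin n) ℝ) 0

/-- `Ā¹_{pq} = [[A_p, B_pK_q],[0, I]]`. -/
def blkAbar1 (n : ℕ) (A BKq : Matrix (Fin n) (Fin n) ℝ) :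
    Matrix (Fin n ⊕ Fin n) (Fin n ⊕ Fin n) ℝ :=
  fromBlocks A BKq 0 (1 : Matrix (Fin n) (Fin n) ℝ)

/-- `Ã¹_p = [[A + BK, 0],[I, 0]]` (DoS-only case). -/
def blkAt1d (n : ℕ) (A BK : Matrix (Fin n) (Fin n) ℝ) :
    Matrix (Fin n ⊕ Fin n) (Fin n ⊕ Fin n) ℝ :=
  fromBlocks (A + BK) 0 (1 : Matrix (Fin n) (Fin n) ℝ) 0

/-- `Π_p` of the synchronous-stage LMI, DoS-only case (cross terms symmetrized). -/
def PiMatD (n : ℕ) (A BK : Matrix (Fin n) (Fin n) ℝ)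
    (P : Matrix (Fin n ⊕ Fin n) (Fin n ⊕ Fin n) ℝ) (bB rhoS : ℝ) :
    Matrix (Fin n ⊕ Fin n) (Fin n ⊕ Fin n) ℝ :=
  let bT : ℝ := bB * (1 - bB)
  let A1 := blkA1d n A BK bB
  let A2 := blkA2 n BK
  let A3 := blkA3 n BK
  A1ᵀ * P * A1 + bT • (A2ᵀ * P * A2) - (1 - rhoS) • P
    - bT • (A2ᵀ * P * A3 + A3ᵀ * P * A2) + bT • (A3ᵀ * P * A3)

/-- `Ω_{pq} = (Ā¹_{pq})ᵀ P_p Ā¹_{pq} - (1+ρᵤ) P_p`. -/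
def OmegaMat (n : ℕ) (A BKq : Matrix (Fin n) (Fin n) ℝ)
    (P : Matrix (Fin n ⊕ Fin n) (Fin n ⊕ Fin n) ℝ) (rhoU : ℝ) :
    Matrix (Fin n ⊕ Fin n) (Fin n ⊕ Fin n) ℝ :=
  (blkAbar1 n A BKq)ᵀ * P * blkAbar1 n A BKq - (1 + rhoU) • P

/-- `Ψ_p = (Ã¹_p)ᵀ P_p Ã¹_p - (1-ρₛ) P_p` (DoS-only case). -/
def PsiMatD (n : ℕ) (A BK : Matrix (Fin n) (Fin n) ℝ)
    (P : Matrix (Fin n ⊕ Fin n) (Fin n ⊕ Fin n) ℝ) (rhoS : ℝ) :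
    Matrix (Fin n ⊕ Fin n) (Fin n ⊕ Fin n) ℝ :=
  (blkAt1d n A BK)ᵀ * P * blkAt1d n A BK - (1 - rhoS) • P


/-! ### Auxiliary machinery for the proof -/

section StabAux

open Matrix

lemma quad_nonneg_of_posSemidef {l : Type*} [Fintype l] {M : Matrix l l ℝ}
    (h : M.PosSemidef) (z : l → ℝ) : 0 ≤ z ⬝ᵥ (M *ᵥ z) := by simpa using h.dotProduct_mulVec_nonneg z

lemma dot_transpose_eq {l : Type*} [Fintype l] (M : Matrix l l ℝ) (z : l → ℝ) :
    z ⬝ᵥ (Mᵀ *ᵥ z) = z ⬝ᵥ (M *ᵥ z) := by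
  rw [Matrix.dotProduct_mulVec, Matrix.vecMul_transpose, dotProduct_comm]

lemma quad_nonpos_of_symNegSemidef {l : Type*} [Fintype l] {M : Matrix l l ℝ}
    (h : SymNegSemidef M) (z : l → ℝ) : z ⬝ᵥ (M *ᵥ z) ≤ 0 := by
  have h0 := quad_nonneg_of_posSemidef h z
  rw [Matrix.neg_mulVec, dotProduct_neg, Matrix.smul_mulVec,
    dotProduct_smul, Matrix.add_mulVec, dotProduct_add,
    dot_transpose_eq] at h0
  simp only [smul_eq_mul] at h0; linarith

lemma dot_tmul {l : Type*} [Fintype l] (X P Y : Matrix l l ℝ) (z : l → ℝ) :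
    z ⬝ᵥ ((Xᵀ * P * Y) *ᵥ z) = (X *ᵥ z) ⬝ᵥ (P *ᵥ (Y *ᵥ z)) := by
  rw [← Matrix.mulVec_mulVec, ← Matrix.mulVec_mulVec, Matrix.dotProduct_mulVec,
    Matrix.vecMul_transpose]

lemma blkA1d_eq (n : ℕ) (A BK : Matrix (Fin n) (Fin n) ℝ) (bB : ℝ) :
    blkA1d n A BK bB = bB • blkAbar1 n A BK + (1 - bB) • blkAt1d n A BK := by
  ext (i|i) (j|j) <;>
    (simp [blkA1d, blkAbar1, blkAt1d, Matrix.add_apply, Matrix.smul_apply, mul_comm] <;> ring)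

lemma blk_diff_eq (n : ℕ) (A BK : Matrix (Fin n) (Fin n) ℝ) :
    blkA2 n BK - blkA3 n BK = blkAbar1 n A BK - blkAt1d n A BK := by
  ext (i|i) (j|j) <;>
    simp [blkA2, blkA3, blkAbar1, blkAt1d, Matrix.sub_apply]

lemma sync_step (n : ℕ) (A BK : Matrix (Fin n) (Fin n) ℝ)
    (P : Matrix (Fin n ⊕ Fin n) (Fin n ⊕ Fin n) ℝ) (bB rhoS : ℝ)
    (hPi : SymNegSemidef (PiMatD n A BK P bB rhoS)) (z : Fin n ⊕ Fin n → ℝ) :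
    bB * ((blkAbar1 n A BK *ᵥ z) ⬝ᵥ (P *ᵥ (blkAbar1 n A BK *ᵥ z)))
      + (1 - bB) * ((blkAt1d n A BK *ᵥ z) ⬝ᵥ (P *ᵥ (blkAt1d n A BK *ᵥ z)))
      ≤ (1 - rhoS) * (z ⬝ᵥ (P *ᵥ z)) := by
  have key := quad_nonpos_of_symNegSemidef hPi z
  have hid : z ⬝ᵥ (PiMatD n A BK P bB rhoS *ᵥ z)
      = bB * ((blkAbar1 n A BK *ᵥ z) ⬝ᵥ (P *ᵥ (blkAbar1 n A BK *ᵥ z)))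
        + (1 - bB) * ((blkAt1d n A BK *ᵥ z) ⬝ᵥ (P *ᵥ (blkAt1d n A BK *ᵥ z)))
        - (1 - rhoS) * (z ⬝ᵥ (P *ᵥ z)) := by
    have h2 : blkA2 n BK *ᵥ z
        = blkA3 n BK *ᵥ z + (blkAbar1 n A BK *ᵥ z - blkAt1d n A BK *ᵥ z) := by
      rw [← Matrix.sub_mulVec, ← blk_diff_eq n A BK, Matrix.sub_mulVec]; abel
    have h1 : blkA1d n A BK bB *ᵥ z
        = bB • (blkAbar1 n A BK *ᵥ z) + (1 - bB) • (blkAt1d n A BK *ᵥ z) := by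
      rw [blkA1d_eq, Matrix.add_mulVec, Matrix.smul_mulVec, Matrix.smul_mulVec]
    simp only [PiMatD]
    simp only [Matrix.add_mulVec, Matrix.sub_mulVec, Matrix.smul_mulVec,
      dotProduct_add, dotProduct_sub, dotProduct_smul, dot_tmul, smul_eq_mul]
    rw [h1, h2]
    simp only [Matrix.mulVec_add, Matrix.mulVec_smul, Matrix.mulVec_sub,
      dotProduct_add, add_dotProduct, smul_dotProduct, dotProduct_smul,
      sub_dotProduct, dotProduct_sub, smul_eq_mul]
    ring
  linarith [hid ▸ key]

lemma omega_quad (n : ℕ) (A BKq : Matrix (Fin n) (Fin n) ℝ)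
    (P : Matrix (Fin n ⊕ Fin n) (Fin n ⊕ Fin n) ℝ) (rhoU : ℝ)
    (h : SymNegSemidef (OmegaMat n A BKq P rhoU)) (z : Fin n ⊕ Fin n → ℝ) :
    (blkAbar1 n A BKq *ᵥ z) ⬝ᵥ (P *ᵥ (blkAbar1 n A BKq *ᵥ z))
      ≤ (1 + rhoU) * (z ⬝ᵥ (P *ᵥ z)) := by
  have key := quad_nonpos_of_symNegSemidef h z
  unfold OmegaMat at key
  rw [Matrix.sub_mulVec, dotProduct_sub, Matrix.smul_mulVec,
    dotProduct_smul, dot_tmul] at key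
  simp only [smul_eq_mul] at key
  linarith

lemma psi_quad (n : ℕ) (A BK : Matrix (Fin n) (Fin n) ℝ)
    (P : Matrix (Fin n ⊕ Fin n) (Fin n ⊕ Fin n) ℝ) (rhoS : ℝ)
    (h : SymNegSemidef (PsiMatD n A BK P rhoS)) (z : Fin n ⊕ Fin n → ℝ) :
    (blkAt1d n A BK *ᵥ z) ⬝ᵥ (P *ᵥ (blkAt1d n A BK *ᵥ z))
      ≤ (1 - rhoS) * (z ⬝ᵥ (P *ᵥ z)) := by
  have key := quad_nonpos_of_symNegSemidef h z
  unfold PsiMatD at key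
  rw [Matrix.sub_mulVec, dotProduct_sub, Matrix.smul_mulVec,
    dotProduct_smul, dot_tmul] at key
  simp only [smul_eq_mul] at key
  linarith

lemma jump_quad {l : Type*} [Fintype l] {Pp Pq : Matrix l l ℝ} {mu : ℝ}
    (h : (mu • Pq - Pp).PosSemidef) (z : l → ℝ) :
    z ⬝ᵥ (Pp *ᵥ z) ≤ mu * (z ⬝ᵥ (Pq *ᵥ z)) := by
  have := quad_nonneg_of_posSemidef h z
  rw [Matrix.sub_mulVec, dotProduct_sub, Matrix.smul_mulVec,
    dotProduct_smul] at this
  simp only [smul_eq_mul] at this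
  linarith

/-! #### A lower bound for positive definite quadratic forms -/

lemma continuous_quad {l : Type*} [Fintype l] (M : Matrix l l ℝ) :
    Continuous fun z : l → ℝ => z ⬝ᵥ (M *ᵥ z) := by
  unfold dotProduct Matrix.mulVec
  exact continuous_finset_sum _ fun i _ =>
    (continuous_apply i).mul (continuous_finset_sum _ fun j _ =>
      (continuous_const.mul (continuous_apply j)))

lemma dot_self_nonneg' {l : Type*} [Fintype l] (z : l → ℝ) : 0 ≤ z ⬝ᵥ z :=
  Finset.sum_nonneg fun j _ => mul_self_nonneg _

lemma eq_zero_of_dot_self_eq_zero {l : Type*} [Fintype l] {z : l → ℝ}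
    (hz : z ⬝ᵥ z = 0) : z = 0 := by
  funext i
  have h1 : z i * z i ≤ z ⬝ᵥ z :=
    Finset.single_le_sum (f := fun j => z j * z j)
      (fun j _ => mul_self_nonneg _) (Finset.mem_univ i)
  rw [hz] at h1
  have := mul_self_nonneg (z i)
  have hzi : z i * z i = 0 := le_antisymm h1 this
  simpa using mul_self_eq_zero.1 hzi

lemma posdef_dot_lower {l : Type*} [Fintype l] [Nonempty l] [DecidableEq l]
    {M : Matrix l l ℝ} (h : M.PosDef) :
    ∃ ε > 0, ∀ z : l → ℝ, ε * (z ⬝ᵥ z) ≤ z ⬝ᵥ (M *ᵥ z) := by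
  classical
  set S : Set (l → ℝ) := {z | z ⬝ᵥ z = 1} with hS
  have hquad : Continuous fun z : l → ℝ => z ⬝ᵥ (M *ᵥ z) := continuous_quad M
  have hdots : Continuous fun z : l → ℝ => z ⬝ᵥ z := by
    have := continuous_quad (1 : Matrix l l ℝ)
    simpa [Matrix.one_mulVec] using this
  have hclosed : IsClosed S := isClosed_eq hdots continuous_const
  have hbdd : Bornology.IsBounded S := by
    apply Bornology.IsBounded.subset (Metric.isBounded_closedBall (x := (0 : l → ℝ)) (r := 1))
    intro z hz
    simp only [Metric.mem_closedBall, dist_zero_right]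
    rw [pi_norm_le_iff_of_nonneg (by norm_num)]
    intro i
    have h1 : z i * z i ≤ z ⬝ᵥ z :=
      Finset.single_le_sum (f := fun j => z j * z j)
        (fun j _ => mul_self_nonneg _) (Finset.mem_univ i)
    rw [hz] at h1
    rw [Real.norm_eq_abs]
    exact abs_le.2 ⟨by nlinarith [abs_nonneg (z i)], by nlinarith⟩
  have hcomp : IsCompact S := Metric.isCompact_of_isClosed_isBounded hclosed hbdd
  have hne : S.Nonempty := by
    obtain ⟨i0⟩ := ‹Nonempty l›
    refine ⟨Pi.single i0 1, ?_⟩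
    show (Pi.single i0 1 : l → ℝ) ⬝ᵥ Pi.single i0 1 = 1
    unfold dotProduct
    rw [Finset.sum_eq_single i0]
    · simp
    · intro b _ hb; simp [Pi.single_apply, hb]
    · intro hi0; exact absurd (Finset.mem_univ _) hi0
  obtain ⟨z0, hz0S, hmin⟩ := hcomp.exists_isMinOn hne hquad.continuousOn
  have hz0ne : z0 ≠ 0 := by
    intro hz
    rw [hS, Set.mem_setOf_eq, hz] at hz0S
    simp [zero_dotProduct] at hz0S
  have hε : 0 < z0 ⬝ᵥ (M *ᵥ z0) := by
    have := h.dotProduct_mulVec_pos hz0ne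
    simpa using this
  refine ⟨z0 ⬝ᵥ (M *ᵥ z0), hε, fun z => ?_⟩
  by_cases hzz : z ⬝ᵥ z = 0
  · simp [eq_zero_of_dot_self_eq_zero hzz]
  · have hpos : 0 < z ⬝ᵥ z := lt_of_le_of_ne (dot_self_nonneg' z) (Ne.symm hzz)
    set t : ℝ := Real.sqrt (z ⬝ᵥ z) with ht
    have ht0 : 0 < t := Real.sqrt_pos.2 hpos
    have ht2 : t * t = z ⬝ᵥ z := Real.mul_self_sqrt hpos.le
    have hu : (t⁻¹ • z) ∈ S := by
      simp only [hS, Set.mem_setOf_eq, smul_dotProduct, dotProduct_smul,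
        smul_eq_mul]
      rw [← mul_assoc, ← ht2]
      field_simp
    have hmin' := hmin hu
    simp only [Set.mem_setOf_eq] at hmin'
    rw [Matrix.mulVec_smul, smul_dotProduct, dotProduct_smul] at hmin'
    simp only [smul_eq_mul] at hmin'
    have hstep : (z0 ⬝ᵥ M *ᵥ z0) * (t * t) ≤ (t * t) * (t⁻¹ * (t⁻¹ * (z ⬝ᵥ M *ᵥ z))) := by
      nlinarith [hmin', mul_pos ht0 ht0]
    have heq : (t * t) * (t⁻¹ * (t⁻¹ * (z ⬝ᵥ M *ᵥ z))) = z ⬝ᵥ M *ᵥ z := by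
      field_simp
    rw [← ht2]
    linarith

/-! #### Decay of the Lyapunov sequence -/

lemma prod_step_bound (T g : ℕ → ℝ) (hg : ∀ k, 0 ≤ g k)
    (hstep : ∀ k, T (k + 1) ≤ g k * T k) :
    ∀ k l : ℕ, T (k + l) ≤ (∏ i ∈ Finset.Ico k (k + l), g i) * T k := by
  intro k l
  induction l with
  | zero => simp
  | succ l ih =>
    have h1 : T (k + (l + 1)) ≤ g (k + l) * T (k + l) := by
      have h := hstep (k + l)
      have he : k + (l + 1) = k + l + 1 := by omega
      rwa [he]
    have h2 : g (k + l) * T (k + l) ≤ g (k + l) * ((∏ i ∈ Finset.Ico k (k + l), g i) * T k) :=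
      mul_le_mul_of_nonneg_left ih (hg _)
    have h3 : (∏ i ∈ Finset.Ico k (k + (l + 1)), g i)
        = g (k + l) * ∏ i ∈ Finset.Ico k (k + l), g i := by
      rw [← add_assoc, Finset.prod_Ico_succ_top (by omega)]
      ring
    rw [h3]
    calc T (k + (l+1)) ≤ g (k+l) * T (k+l) := h1
      _ ≤ _ := h2
      _ = _ := by ring

lemma seq_decay (T : ℕ → ℝ) (sw : ℕ → Bool) (ν lam : ℝ) (τ : ℕ) (hτ : 1 ≤ τ)
    (hlam0 : 0 < lam) (hlam1 : lam < 1) (hν : 1 ≤ ν) (hθ : ν * lam ^ τ < 1)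
    (hT : ∀ k, 0 ≤ T k)
    (hstep : ∀ k, T (k + 1) ≤ (if sw k then ν * lam else lam) * T k)
    (hdwell : ∀ j k, j < k → sw j = true → sw k = true → j + τ ≤ k) :
    Filter.Tendsto T Filter.atTop (nhds 0) := by
  classical
  set g : ℕ → ℝ := fun k => if sw k then ν * lam else lam with hgdef
  have hg0 : ∀ k, 0 ≤ g k := by
    intro k; by_cases h : sw k <;> simp [hgdef, h] <;> positivity
  have hgle : ∀ k, g k ≤ ν * lam := by
    intro k; by_cases h : sw k <;> simp [hgdef, h]
    nlinarith
  have hwin : ∀ k, (∏ i ∈ Finset.Ico k (k + τ), g i) ≤ ν * lam ^ τ := by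
    intro k
    by_cases hsw : ∃ i ∈ Finset.Ico k (k + τ), sw i = true
    · obtain ⟨i0, hi0mem, hi0⟩ := hsw
      have honly : ∀ i ∈ Finset.Ico k (k + τ), i ≠ i0 → g i = lam := by
        intro i himem hine
        have hsn : ¬ sw i = true := by
          intro hswi
          rcases lt_or_gt_of_ne hine with h' | h'
          · have := hdwell i i0 h' hswi hi0
            simp only [Finset.mem_Ico] at himem hi0mem
            omega
          · have := hdwell i0 i h' hi0 hswi
            simp only [Finset.mem_Ico] at himem hi0mem
            omega
        simp [hgdef, hsn]
      have hsplit : (∏ i ∈ Finset.Ico k (k + τ), g i)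
          = g i0 * ∏ i ∈ (Finset.Ico k (k + τ)).erase i0, g i := by
        rw [Finset.mul_prod_erase _ _ hi0mem]
      have herase : ∏ i ∈ (Finset.Ico k (k + τ)).erase i0, g i = lam ^ (τ - 1) := by
        rw [Finset.prod_congr rfl (fun i hi => honly i (Finset.mem_of_mem_erase hi)
          (Finset.ne_of_mem_erase hi))]
        rw [Finset.prod_const]
        congr 1
        rw [Finset.card_erase_of_mem hi0mem, Nat.card_Ico]
        omega
      rw [hsplit, herase]
      have hgi0 : g i0 = ν * lam := by simp [hgdef, hi0]
      rw [hgi0]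
      have hpow : lam * lam ^ (τ - 1) = lam ^ τ := by
        rw [← pow_succ']
        congr 1
        omega
      apply le_of_eq
      rw [mul_assoc, hpow]
    · push_neg at hsw
      have hall : ∀ i ∈ Finset.Ico k (k + τ), g i = lam := by
        intro i hi
        have := hsw i hi
        simp [hgdef, this]
      rw [Finset.prod_congr rfl hall, Finset.prod_const, Nat.card_Ico]
      have h1 : lam ^ (k + τ - k) = lam ^ τ := by congr 1; omega
      rw [h1]
      nlinarith [pow_pos hlam0 τ]
  set θ := ν * lam ^ τ with hθdef
  have hθ0 : 0 ≤ θ := by positivity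
  have hblock : ∀ q : ℕ, T (q * τ) ≤ θ ^ q * T 0 := by
    intro q
    induction q with
    | zero => simp
    | succ q ih =>
      have h1 : T (q * τ + τ) ≤ (∏ i ∈ Finset.Ico (q * τ) (q * τ + τ), g i) * T (q * τ) :=
        prod_step_bound T g hg0 (fun k => hstep k) (q * τ) τ
      have h2 : (∏ i ∈ Finset.Ico (q * τ) (q * τ + τ), g i) * T (q * τ) ≤ θ * T (q * τ) :=
        mul_le_mul_of_nonneg_right (hwin _) (hT _)
      have h3 : θ * T (q * τ) ≤ θ * (θ ^ q * T 0) := mul_le_mul_of_nonneg_left ih hθ0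
      have heq : (q + 1) * τ = q * τ + τ := by ring
      rw [heq]
      calc T (q * τ + τ) ≤ θ * T (q*τ) := le_trans h1 h2
        _ ≤ θ * (θ ^ q * T 0) := h3
        _ = θ ^ (q+1) * T 0 := by ring
  have hC2 : (0:ℝ) ≤ (1 + ν * lam) ^ τ := by positivity
  have hgle2 : ∀ k, g k ≤ 1 + ν * lam := fun k => le_trans (hgle k) (by linarith)
  have hmain : ∀ k, T k ≤ ((1 + ν * lam) ^ τ * T 0) * θ ^ (k / τ) := by
    intro k
    have hk : k = (k / τ) * τ + k % τ := (Nat.div_add_mod' k τ).symm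
    have h1 : T k ≤ (∏ i ∈ Finset.Ico ((k/τ)*τ) ((k/τ)*τ + k % τ), g i) * T ((k/τ)*τ) := by
      conv_lhs => rw [hk]
      exact prod_step_bound T g hg0 hstep _ _
    have h2 : (∏ i ∈ Finset.Ico ((k/τ)*τ) ((k/τ)*τ + k % τ), g i)
        ≤ (1 + ν * lam) ^ (k % τ) := by
      calc (∏ i ∈ Finset.Ico ((k/τ)*τ) ((k/τ)*τ + k % τ), g i)
          ≤ ∏ _i ∈ Finset.Ico ((k/τ)*τ) ((k/τ)*τ + k % τ), (1 + ν * lam) :=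
            Finset.prod_le_prod (fun i _ => hg0 i) (fun i _ => hgle2 i)
        _ = (1 + ν * lam) ^ (k % τ) := by rw [Finset.prod_const, Nat.card_Ico]; congr 1; omega
    have h3 : (1 + ν*lam) ^ (k % τ) ≤ (1 + ν*lam) ^ τ := by
      apply pow_le_pow_right₀ (by nlinarith) (le_of_lt (Nat.mod_lt _ (by omega)))
    calc T k ≤ (∏ i ∈ Finset.Ico ((k/τ)*τ) ((k/τ)*τ + k % τ), g i) * T ((k/τ)*τ) := h1
      _ ≤ (1 + ν*lam) ^ (k % τ) * T ((k/τ)*τ) :=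
          mul_le_mul_of_nonneg_right h2 (hT _)
      _ ≤ (1 + ν*lam) ^ τ * T ((k/τ)*τ) :=
          mul_le_mul_of_nonneg_right h3 (hT _)
      _ ≤ (1 + ν*lam) ^ τ * (θ ^ (k/τ) * T 0) :=
          mul_le_mul_of_nonneg_left (hblock _) hC2
      _ = ((1 + ν*lam) ^ τ * T 0) * θ ^ (k/τ) := by ring
  have hdiv : Filter.Tendsto (fun k : ℕ => k / τ) Filter.atTop Filter.atTop := by
    apply Filter.tendsto_atTop_atTop.2
    intro b
    exact ⟨b * τ, fun k hk => (Nat.le_div_iff_mul_le (by omega)).2 hk⟩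
  have hpow : Filter.Tendsto (fun k : ℕ => θ ^ (k / τ)) Filter.atTop (nhds 0) :=
    (tendsto_pow_atTop_nhds_zero_of_lt_one hθ0 hθ).comp hdiv
  have hlim : Filter.Tendsto (fun k : ℕ => ((1 + ν*lam) ^ τ * T 0) * θ ^ (k/τ))
      Filter.atTop (nhds 0) := by
    have := hpow.const_mul ((1 + ν*lam) ^ τ * T 0)
    simpa using this
  exact squeeze_zero hT hmain hlim

/-! #### Atoms and weights of the Bernoulli process -/

def bval (b : Bool) : ℝ := if b then 1 else 0
def pw (betaBar : ℝ) (b : Bool) : ℝ := if b then betaBar else 1 - betaBar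

lemma pw_nonneg (betaBar : ℝ) (hb0 : 0 ≤ betaBar) (hb1 : betaBar ≤ 1) (b : Bool) :
    0 ≤ pw betaBar b := by
  cases b <;> simp [pw] <;> linarith

section Meas
variable {Ω : Type*} [MeasurableSpace Ω] (μ : Measure Ω) [IsProbabilityMeasure μ]
  (β : ℕ → Ω → ℝ) (hβm : ∀ k, Measurable (β k))
  (hβ01 : ∀ k ω, β k ω = 0 ∨ β k ω = 1)
  (hindep : iIndepFun β μ)
  (betaBar : ℝ) (hb0 : 0 ≤ betaBar) (hb1 : betaBar ≤ 1)
  (hβprob : ∀ k, μ {ω | β k ω = 1} = ENNReal.ofReal betaBar)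

include hβm hβ01 hβprob hb0 in
lemma meas_single (i : ℕ) (b : Bool) :
    μ (β i ⁻¹' {bval b}) = ENNReal.ofReal (pw betaBar b) := by
  have h1 : μ (β i ⁻¹' {(1:ℝ)}) = ENNReal.ofReal betaBar := by
    have hpre : β i ⁻¹' {(1:ℝ)} = {ω | β i ω = 1} := by ext ω; simp
    rw [hpre, hβprob i]
  cases b
  · simp only [bval, pw, Bool.false_eq_true, if_false]
    have hdisj : Disjoint (β i ⁻¹' {(0:ℝ)}) (β i ⁻¹' {(1:ℝ)}) := by
      apply Set.disjoint_left.2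
      intro ω h0 h1'
      simp only [Set.mem_preimage, Set.mem_singleton_iff] at h0 h1'
      rw [h0] at h1'; norm_num at h1'
    have huniv : β i ⁻¹' {(0:ℝ)} ∪ β i ⁻¹' {(1:ℝ)} = Set.univ := by
      ext ω
      simp only [Set.mem_union, Set.mem_preimage, Set.mem_singleton_iff, Set.mem_univ, iff_true]
      exact hβ01 i ω
    have hm1 : MeasurableSet (β i ⁻¹' {(1:ℝ)}) := hβm i (measurableSet_singleton _)
    have hadd : μ (β i ⁻¹' {(0:ℝ)}) + μ (β i ⁻¹' {(1:ℝ)}) = 1 := by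
      rw [← measure_union hdisj hm1, huniv, measure_univ]
    rw [h1] at hadd
    have h0 : μ (β i ⁻¹' {(0:ℝ)}) = 1 - ENNReal.ofReal betaBar := by
      rw [← hadd, ENNReal.add_sub_cancel_right (by simp)]
    rw [h0, ENNReal.ofReal_sub 1 hb0, ENNReal.ofReal_one]
  · simpa [bval, pw] using h1

def atomSet (β : ℕ → Ω → ℝ) (k : ℕ) (a : Fin k → Bool) : Set Ω :=
  ⋂ i : Fin k, β i ⁻¹' {bval (a i)}

include hβm in
lemma atom_measurable (k : ℕ) (a : Fin k → Bool) : MeasurableSet (atomSet β k a) :=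
  MeasurableSet.iInter fun i => hβm i (measurableSet_singleton _)

include hβm hβ01 hβprob hb0 hb1 hindep in
lemma atom_measure (k : ℕ) (a : Fin k → Bool) :
    μ (atomSet β k a) = ENNReal.ofReal (∏ i, pw betaBar (a i)) := by
  classical
  set sets : ℕ → Set ℝ := fun i => if h : i < k then {bval (a ⟨i, h⟩)} else Set.univ with hsets
  have hmeas : ∀ i, i ∈ Finset.range k → MeasurableSet (sets i) := by
    intro i _
    by_cases h : i < k <;> simp [hsets, h]
  have hset_eq : atomSet β k a = ⋂ i ∈ Finset.range k, β i ⁻¹' sets i := by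
    ext ω
    simp only [atomSet, Set.mem_iInter, Set.mem_preimage, Finset.mem_range]
    constructor
    · intro h i hi
      simp only [hsets, dif_pos hi]
      exact h ⟨i, hi⟩
    · intro h i
      have := h i i.isLt
      simpa only [hsets, dif_pos i.isLt] using this
  rw [hset_eq, hindep.measure_inter_preimage_eq_mul (Finset.range k) hmeas]
  rw [← Fin.prod_univ_eq_prod_range (fun i => μ (β i ⁻¹' sets i)) k]
  rw [ENNReal.ofReal_prod_of_nonneg (fun i _ => pw_nonneg betaBar hb0 hb1 (a i))]
  apply Finset.prod_congr rfl
  intro i _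
  have h1 : sets (i : ℕ) = {bval (a i)} := by
    simp only [hsets, dif_pos i.isLt, Fin.eta]
  rw [h1]
  exact meas_single μ β hβm hβ01 betaBar hb0 hβprob i _

open Classical in
def bitsOf (β : ℕ → Ω → ℝ) (k : ℕ) (ω : Ω) : Fin k → Bool :=
  fun i => if β i ω = 1 then true else false

include hβ01 in
lemma mem_atom_iff (k : ℕ) (a : Fin k → Bool) (ω : Ω) :
    ω ∈ atomSet β k a ↔ a = bitsOf β k ω := by
  classical
  simp only [atomSet, Set.mem_iInter, Set.mem_preimage, Set.mem_singleton_iff]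
  constructor
  · intro h
    funext i
    have hi := h i
    cases hai : a i
    · rw [hai] at hi
      simp only [bval, Bool.false_eq_true, if_false] at hi
      simp [bitsOf, hi]
    · rw [hai] at hi
      simp only [bval, if_true] at hi
      simp [bitsOf, hi]
  · intro h i
    rw [h]
    rcases hβ01 i ω with h0 | h1
    · simp [bitsOf, bval, h0]
    · simp [bitsOf, bval, h1]

include hβm hβ01 hβprob hb0 hb1 hindep in
lemma integral_bits (k : ℕ) (g : (Fin k → Bool) → ℝ) :
    ∫ ω, g (bitsOf β k ω) ∂μ = ∑ a : Fin k → Bool, (∏ i, pw betaBar (a i)) * g a := by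
  classical
  have hfun : (fun ω => g (bitsOf β k ω))
      = fun ω => ∑ a : Fin k → Bool, Set.indicator (atomSet β k a) (fun _ => g a) ω := by
    funext ω
    rw [Finset.sum_eq_single (bitsOf β k ω)]
    · rw [Set.indicator_of_mem ((mem_atom_iff β hβ01 k _ ω).2 rfl)]
    · intro a _ ha
      exact Set.indicator_of_notMem (fun hm => ha ((mem_atom_iff β hβ01 k a ω).1 hm)) _
    · intro h; exact absurd (Finset.mem_univ _) h
  rw [hfun, integral_finset_sum]
  · apply Finset.sum_congr rfl
    intro a _
    rw [integral_indicator_const _ (atom_measurable β hβm k a), measureReal_def,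
      atom_measure μ β hβm hβ01 hindep betaBar hb0 hb1 hβprob k a]
    rw [ENNReal.toReal_ofReal (Finset.prod_nonneg fun i _ => pw_nonneg betaBar hb0 hb1 (a i))]
    simp [mul_comm]
  · intro a _
    exact (integrable_const (g a)).indicator (atom_measurable β hβm k a)

end Meas

/-! #### The deterministic trajectory tree -/

def tupleRec {α : Type*} (init : α) (step : ℕ → Bool → α → α) :
    (k : ℕ) → (Fin k → Bool) → α
  | 0, _ => init
  | (k+1), a => step k (a (Fin.last k)) (tupleRec init step k (Fin.init a))

lemma tupleRec_snoc {α : Type*} (init : α) (step : ℕ → Bool → α → α)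
    (k : ℕ) (a : Fin k → Bool) (b : Bool) :
    tupleRec init step (k+1) (Fin.snoc a b) = step k b (tupleRec init step k a) := by
  simp [tupleRec, Fin.init_snoc, Fin.snoc_last]

section Traj
variable {n r m : ℕ} (A : Fin m → Matrix (Fin n) (Fin n) ℝ)
  (B : Fin m → Matrix (Fin n) (Fin r) ℝ) (K : Fin m → Matrix (Fin r) (Fin n) ℝ)
  (σ : ℕ → Fin m) (x0 y0 : Fin n → ℝ)

def stepFn (k : ℕ) (b : Bool) (t : (Fin n → ℝ) × (Fin n → ℝ) × Fin m) :
    (Fin n → ℝ) × (Fin n → ℝ) × Fin m :=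
  (A (σ k) *ᵥ t.1 + B (σ k) *ᵥ (K (if b then t.2.2 else σ k) *ᵥ (if b then t.2.1 else t.1)),
   (if b then t.2.1 else t.1), if b then t.2.2 else σ k)

def trajFn : (k : ℕ) → (Fin k → Bool) → (Fin n → ℝ) × (Fin n → ℝ) × Fin m :=
  tupleRec (x0, y0, σ 0) (stepFn A B K σ)

lemma trajFn_zero (a : Fin 0 → Bool) : trajFn A B K σ x0 y0 0 a = (x0, y0, σ 0) := rfl

lemma trajFn_snoc (k : ℕ) (a : Fin k → Bool) (b : Bool) :
    trajFn A B K σ x0 y0 (k+1) (Fin.snoc a b)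
      = stepFn A B K σ k b (trajFn A B K σ x0 y0 k a) :=
  tupleRec_snoc _ _ _ _ _

lemma trajFn_s_snoc (k : ℕ) (a : Fin k → Bool) (b : Bool) :
    (trajFn A B K σ x0 y0 (k+1) (Fin.snoc a b)).2.2
      = if b then (trajFn A B K σ x0 y0 k a).2.2 else σ k := by
  rw [trajFn_snoc]; rfl

lemma trajFn_z_snoc (k : ℕ) (a : Fin k → Bool) (b : Bool) :
    Sum.elim (trajFn A B K σ x0 y0 (k+1) (Fin.snoc a b)).1
        (trajFn A B K σ x0 y0 (k+1) (Fin.snoc a b)).2.1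
      = (if b then blkAbar1 n (A (σ k)) (B (σ k) * K ((trajFn A B K σ x0 y0 k a).2.2))
          else blkAt1d n (A (σ k)) (B (σ k) * K (σ k)))
        *ᵥ Sum.elim (trajFn A B K σ x0 y0 k a).1 (trajFn A B K σ x0 y0 k a).2.1 := by
  rw [trajFn_snoc]
  set t := trajFn A B K σ x0 y0 k a
  cases b
  · rw [if_neg (by simp), blkAt1d, Matrix.fromBlocks_mulVec,
      Sum.elim_comp_inl, Sum.elim_comp_inr]
    simp [stepFn, Matrix.add_mulVec, Matrix.mulVec_mulVec, Matrix.one_mulVec,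
      Matrix.zero_mulVec]
  · rw [if_pos rfl, blkAbar1, Matrix.fromBlocks_mulVec,
      Sum.elim_comp_inl, Sum.elim_comp_inr]
    simp [stepFn, Matrix.mulVec_mulVec, Matrix.one_mulVec, Matrix.zero_mulVec]

lemma bitsOf_succ {Ω : Type*} (β : ℕ → Ω → ℝ) (k : ℕ) (ω : Ω) :
    bitsOf β (k+1) ω = Fin.snoc (bitsOf β k ω)
      (if β k ω = 1 then true else false) := by
  classical
  funext i
  refine Fin.lastCases ?_ (fun j => ?_) i
  · rw [Fin.snoc_last]
    simp [bitsOf]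
  · rw [Fin.snoc_castSucc]
    simp [bitsOf]

lemma traj_corr {Ω : Type*} (β : ℕ → Ω → ℝ) (hβ01 : ∀ k ω, β k ω = 0 ∨ β k ω = 1)
    (x y : ℕ → Ω → Fin n → ℝ) (s : ℕ → Ω → Fin m)
    (hx0 : ∀ ω, x 0 ω = x0) (hy0 : ∀ ω, y 0 ω = y0) (hs0 : ∀ ω, s 0 ω = σ 0)
    (hy : ∀ k ω, y (k+1) ω = (1 - β k ω) • x k ω + β k ω • y k ω)
    (hs : ∀ k ω, s (k+1) ω = if β k ω = 1 then s k ω else σ k)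
    (hx : ∀ k ω, x (k+1) ω
      = A (σ k) *ᵥ x k ω + B (σ k) *ᵥ (K (s (k+1) ω) *ᵥ y (k+1) ω)) :
    ∀ k ω, (x k ω, y k ω, s k ω) = trajFn A B K σ x0 y0 k (bitsOf β k ω) := by
  intro k
  induction k with
  | zero => intro ω; rw [trajFn_zero, hx0, hy0, hs0]
  | succ k ih =>
    intro ω
    rw [bitsOf_succ, trajFn_snoc, ← ih ω]
    rcases hβ01 k ω with h0 | h1
    · rw [if_neg (by rw [h0]; norm_num)]
      have hyk : y (k+1) ω = x k ω := by
        rw [hy k ω, h0]; simp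
      have hsk : s (k+1) ω = σ k := by
        rw [hs k ω, if_neg (by rw [h0]; norm_num)]
      have hxk : x (k+1) ω = A (σ k) *ᵥ x k ω + B (σ k) *ᵥ (K (σ k) *ᵥ x k ω) := by
        rw [hx k ω, hsk, hyk]
      rw [hxk, hyk, hsk]
      simp [stepFn]
    · rw [if_pos h1]
      have hyk : y (k+1) ω = y k ω := by
        rw [hy k ω, h1]; simp
      have hsk : s (k+1) ω = s k ω := by
        rw [hs k ω, if_pos h1]
      have hxk : x (k+1) ω = A (σ k) *ᵥ x k ω + B (σ k) *ᵥ (K (s k ω) *ᵥ y k ω) := by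
        rw [hx k ω, hsk, hyk]
      rw [hxk, hyk, hsk]
      simp [stepFn]

end Traj

lemma sum_snoc_split {M : Type*} [AddCommMonoid M] (k : ℕ) (F : (Fin (k+1) → Bool) → M) :
    ∑ a : Fin (k+1) → Bool, F a
      = ∑ a : Fin k → Bool, (F (Fin.snoc a true) + F (Fin.snoc a false)) := by
  rw [← (Fin.snocEquiv (fun _ => Bool)).sum_comp F, Fintype.sum_prod_type, Finset.sum_comm]
  apply Finset.sum_congr rfl
  intro a _
  rw [Fintype.sum_bool]
  rfl

lemma pw_prod_snoc (betaBar : ℝ) (k : ℕ) (a : Fin k → Bool) (b : Bool) :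
    (∏ i : Fin (k+1), pw betaBar ((Fin.snoc a b : Fin (k+1) → Bool) i))
      = (∏ i, pw betaBar (a i)) * pw betaBar b := by
  rw [Fin.prod_univ_castSucc]
  simp [Fin.snoc_castSucc, Fin.snoc_last]

lemma if_sum_split {k : ℕ} (p : (Fin k → Bool) → Prop) [DecidablePred p]
    (X Y : (Fin k → Bool) → ℝ) :
    ∑ a : Fin k → Bool, (if p a then X a else Y a)
      = (∑ a : Fin k → Bool, if p a then X a else 0)
        + ∑ a : Fin k → Bool, if p a then 0 else Y a := by
  rw [← Finset.sum_add_distrib]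
  apply Finset.sum_congr rfl
  intro a _
  by_cases h : p a <;> simp [h]

lemma sum_if_mul {k : ℕ} (p : (Fin k → Bool) → Prop) [DecidablePred p]
    (cst : ℝ) (X : (Fin k → Bool) → ℝ) :
    ∑ a : Fin k → Bool, (if p a then cst * X a else 0)
      = cst * ∑ a : Fin k → Bool, (if p a then X a else 0) := by
  rw [Finset.mul_sum]
  apply Finset.sum_congr rfl
  intro a _
  by_cases h : p a <;> simp [h]

lemma sum_if_mul' {k : ℕ} (p : (Fin k → Bool) → Prop) [DecidablePred p]
    (cst : ℝ) (X : (Fin k → Bool) → ℝ) :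
    ∑ a : Fin k → Bool, (if p a then 0 else cst * X a)
      = cst * ∑ a : Fin k → Bool, (if p a then 0 else X a) := by
  rw [Finset.mul_sum]
  apply Finset.sum_congr rfl
  intro a _
  by_cases h : p a <;> simp [h]

end StabAux

set_option maxHeartbeats 3200000 in
/-- **Corollary 2.** DoS attack only: under the LMI conditions
`Π_p ⪯ 0`, `Ω_{pq} ⪯ 0`, `Ψ_p ⪯ 0`, `P_p ⪯ μP_q`, `c < 1` and the dwell-time
condition `μ̄(1-ρₛ)^{τ_d} < 1`, the switched closed loop subject to DoS attack is
asymptotically stable in the mean square sense: `E‖x̃(k)‖² → 0`. -/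
theorem stmt2 (n r m : ℕ)
    (A : Fin m → Matrix (Fin n) (Fin n) ℝ) (B : Fin m → Matrix (Fin n) (Fin r) ℝ)
    (K : Fin m → Matrix (Fin r) (Fin n) ℝ) (σ : ℕ → Fin m)
    {Ω : Type*} [MeasurableSpace Ω] (μ : Measure Ω) [IsProbabilityMeasure μ]
    -- DoS attack process
    (β : ℕ → Ω → ℝ) (hβm : ∀ k, Measurable (β k))
    (hβ01 : ∀ k ω, β k ω = 0 ∨ β k ω = 1)
    (hindep : iIndepFun β μ)
    (betaBar : ℝ) (hbetaBar : 0 ≤ betaBar ∧ betaBar ≤ 1)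
    (hβprob : ∀ k, μ {ω | β k ω = 1} = ENNReal.ofReal betaBar)
    -- scalar hypotheses
    (mu rhoS rhoU c muBar : ℝ)
    (hmu : 1 < mu) (hrhoS : 0 < rhoS ∧ rhoS < 1) (hrhoU : 0 < rhoU)
    (hcdef : c = betaBar * (1 + rhoU) / (1 - rhoS)) (hc1 : c < 1)
    (hmuBar : muBar = mu * (2 - betaBar - c) / (1 - c))
    -- LMI hypotheses
    (P : Fin m → Matrix (Fin n ⊕ Fin n) (Fin n ⊕ Fin n) ℝ) (hP : ∀ p, (P p).PosDef)
    (hPi : ∀ p, SymNegSemidef (PiMatD n (A p) (B p * K p) (P p) betaBar rhoS))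
    (hOmega : ∀ p q, p ≠ q → SymNegSemidef (OmegaMat n (A p) (B p * K q) (P p) rhoU))
    (hPsi : ∀ p, SymNegSemidef (PsiMatD n (A p) (B p * K p) (P p) rhoS))
    (hPmu : ∀ p q, p ≠ q → (mu • P q - P p).PosSemidef)
    -- dwell-time hypotheses on the switching signal
    (tauD : ℕ) (hdwell : HasDwellTime σ tauD)
    (htau : muBar * (1 - rhoS) ^ tauD < 1)
    -- closed-loop processes: `y k = x̄(k-1)`, `s k = σ̄(k-1)`
    (x0 xbar0 : Fin n → ℝ) (x y : ℕ → Ω → Fin n → ℝ) (s : ℕ → Ω → Fin m)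
    (hx0 : ∀ ω, x 0 ω = x0) (hy0 : ∀ ω, y 0 ω = xbar0) (hs0 : ∀ ω, s 0 ω = σ 0)
    (hy : ∀ k ω, y (k + 1) ω = (1 - β k ω) • x k ω + β k ω • y k ω)
    (hs : ∀ k ω, s (k + 1) ω = if β k ω = 1 then s k ω else σ k)
    (hx : ∀ k ω, x (k + 1) ω
      = A (σ k) *ᵥ x k ω + B (σ k) *ᵥ (K (s (k + 1) ω) *ᵥ y (k + 1) ω)) :
    Tendsto
      (fun k : ℕ => ∫ ω, Sum.elim (x k ω) (y k ω) ⬝ᵥ Sum.elim (x k ω) (y k ω) ∂μ)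
      atTop (nhds 0) := by
  classical
  -- trivial dimension case
  rcases Nat.eq_zero_or_pos n with hn0 | hnpos
  · subst hn0
    have hzero : ∀ (k : ℕ) (ω : Ω),
        Sum.elim (x k ω) (y k ω) ⬝ᵥ Sum.elim (x k ω) (y k ω) = 0 := by
      intro k ω
      simp [dotProduct]
    simp only [hzero, integral_zero]
    exact tendsto_const_nhds
  have hne2n : Nonempty (Fin n ⊕ Fin n) := ⟨Sum.inl ⟨0, hnpos⟩⟩
  obtain ⟨hb0, hb1⟩ := hbetaBar
  obtain ⟨hrS0, hrS1⟩ := hrhoS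
  set lam : ℝ := 1 - rhoS with hlam
  have hlam0 : 0 < lam := by rw [hlam]; linarith
  have hlam1 : lam < 1 := by rw [hlam]; linarith
  have hclam : c * lam = betaBar * (1 + rhoU) := by
    rw [hcdef, hlam]
    field_simp
    exact mul_div_cancel_right₀ _ (by linarith)
  have hc0 : 0 ≤ c := by
    rw [hcdef]
    have h1 : 0 ≤ betaBar * (1 + rhoU) := by nlinarith
    have h2 : 0 < 1 - rhoS := by linarith
    positivity
  have h1c : 0 < 1 - c := by linarith
  have hbc : betaBar ≤ c := by nlinarith [hclam, hc0, hb0, hrhoU.le, hlam1.le]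
  set kap : ℝ := (2 - betaBar - c) / (1 - c) with hkap
  have hkapmul : kap * (1 - c) = 2 - betaBar - c := by
    rw [hkap]; field_simp
  have hkap1 : 1 ≤ kap := by nlinarith [hkapmul]
  have hkapc : (1 - betaBar) + kap * c ≤ kap := by nlinarith [hkapmul]
  have hkapbc : c + (1 - betaBar) ≤ kap := by
    nlinarith [hkapmul, mul_nonneg hc0 (sub_nonneg.2 hbc)]
  have hmuk : muBar = mu * kap := by
    rw [hmuBar, hkap]; ring
  have hmuBar1 : 1 ≤ muBar := by nlinarith [hmuk]
  have htau1 : 1 ≤ tauD := by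
    rcases Nat.eq_zero_or_pos tauD with h0 | h1
    · rw [h0] at htau
      simp only [pow_zero, mul_one] at htau
      linarith
    · exact h1
  -- abbreviations
  set D := trajFn A B K σ x0 xbar0 with hDdef
  set wgt : (k : ℕ) → (Fin k → Bool) → ℝ := fun k a => ∏ i, pw betaBar (a i) with hwgt
  set zv : (k : ℕ) → (Fin k → Bool) → (Fin n ⊕ Fin n → ℝ) :=
    fun k a => Sum.elim (D k a).1 (D k a).2.1 with hzv
  set Uq : (k : ℕ) → (Fin k → Bool) → ℝ :=
    fun k a => zv k a ⬝ᵥ (P (σ k) *ᵥ zv k a) with hUq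
  set Qn : (k : ℕ) → (Fin k → Bool) → Bool → ℝ :=
    fun k a b => zv (k+1) (Fin.snoc a b) ⬝ᵥ (P (σ k) *ᵥ zv (k+1) (Fin.snoc a b)) with hQn
  set Ssig : ℕ → ℝ := fun k => ∑ a : Fin k → Bool,
    if (D k a).2.2 = σ k then wgt k a * Uq k a else 0 with hSsig
  set Sd : ℕ → ℝ := fun k => ∑ a : Fin k → Bool,
    if (D k a).2.2 = σ k then 0 else wgt k a * Uq k a with hSd
  set Tt : ℕ → ℝ := fun k => Ssig k + kap * Sd k with hTt
  -- nonnegativity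
  have hw0 : ∀ k a, 0 ≤ wgt k a := fun k a =>
    Finset.prod_nonneg fun i _ => pw_nonneg betaBar hb0 hb1 _
  have hU0 : ∀ k a, 0 ≤ Uq k a := fun k a =>
    quad_nonneg_of_posSemidef (hP (σ k)).posSemidef _
  have hQ0 : ∀ k (a : Fin k → Bool) b, 0 ≤ Qn k a b := fun k a b =>
    quad_nonneg_of_posSemidef (hP (σ k)).posSemidef _
  have hSsig0 : ∀ k, 0 ≤ Ssig k := by
    intro k
    apply Finset.sum_nonneg
    intro a _
    by_cases h : (D k a).2.2 = σ k
    · rw [if_pos h]; exact mul_nonneg (hw0 k a) (hU0 k a)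
    · rw [if_neg h]
  have hSd0 : ∀ k, 0 ≤ Sd k := by
    intro k
    apply Finset.sum_nonneg
    intro a _
    by_cases h : (D k a).2.2 = σ k
    · rw [if_pos h]
    · rw [if_neg h]; exact mul_nonneg (hw0 k a) (hU0 k a)
  have hTt0 : ∀ k, 0 ≤ Tt k := by
    intro k
    have := mul_nonneg (by linarith : (0:ℝ) ≤ kap) (hSd0 k)
    have := hSsig0 k
    rw [hTt]
    dsimp only
    linarith
  have hsplit : ∀ k, ∑ a : Fin k → Bool, wgt k a * Uq k a = Ssig k + Sd k := by
    intro k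
    rw [hSsig, hSd]
    dsimp only
    rw [← if_sum_split (fun a => (D k a).2.2 = σ k)
      (fun a => wgt k a * Uq k a) (fun a => wgt k a * Uq k a)]
    apply Finset.sum_congr rfl
    intro a _
    by_cases h : (D k a).2.2 = σ k <;> simp [h]
  -- snoc computations
  have hwsnoc : ∀ k (a : Fin k → Bool) b,
      wgt (k+1) (Fin.snoc a b) = wgt k a * pw betaBar b := by
    intro k a b
    rw [hwgt]
    exact pw_prod_snoc betaBar k a b
  have hssnoc : ∀ k (a : Fin k → Bool) b,
      (D (k+1) (Fin.snoc a b)).2.2 = if b then (D k a).2.2 else σ k := by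
    intro k a b
    rw [hDdef]
    exact trajFn_s_snoc A B K σ x0 xbar0 k a b
  have hssnocT : ∀ k (a : Fin k → Bool), (D (k+1) (Fin.snoc a true)).2.2 = (D k a).2.2 := by
    intro k a
    rw [hssnoc k a true]
    simp
  have hssnocF : ∀ k (a : Fin k → Bool), (D (k+1) (Fin.snoc a false)).2.2 = σ k := by
    intro k a
    rw [hssnoc k a false]
    simp
  have hzsnoc : ∀ k (a : Fin k → Bool) b,
      zv (k+1) (Fin.snoc a b)
        = (if b then blkAbar1 n (A (σ k)) (B (σ k) * K ((D k a).2.2))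
            else blkAt1d n (A (σ k)) (B (σ k) * K (σ k))) *ᵥ zv k a := by
    intro k a b
    rw [hzv, hDdef]
    exact trajFn_z_snoc A B K σ x0 xbar0 k a b
  -- quadratic-form step bounds
  have hQtrue_desync : ∀ k (a : Fin k → Bool), (D k a).2.2 ≠ σ k →
      Qn k a true ≤ (1 + rhoU) * Uq k a := by
    intro k a hns
    have hz := hzsnoc k a true
    rw [if_pos rfl] at hz
    rw [hQn, hUq]
    dsimp only
    rw [hz]
    exact omega_quad n _ _ _ rhoU (hOmega (σ k) ((D k a).2.2) (Ne.symm hns)) (zv k a)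
  have hQfalse : ∀ k (a : Fin k → Bool), Qn k a false ≤ lam * Uq k a := by
    intro k a
    have hz := hzsnoc k a false
    rw [if_neg (by simp)] at hz
    rw [hQn, hUq, hlam]
    dsimp only
    rw [hz]
    exact psi_quad n _ _ _ rhoS (hPsi (σ k)) (zv k a)
  have hQsync : ∀ k (a : Fin k → Bool), (D k a).2.2 = σ k →
      betaBar * Qn k a true + (1 - betaBar) * Qn k a false ≤ lam * Uq k a := by
    intro k a hsync
    have hzt := hzsnoc k a true
    rw [if_pos rfl, hsync] at hzt
    have hzf := hzsnoc k a false
    rw [if_neg (by simp)] at hzf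
    rw [hQn, hUq, hlam]
    dsimp only
    rw [hzt, hzf]
    exact sync_step n (A (σ k)) (B (σ k) * K (σ k)) (P (σ k)) betaBar rhoS
      (hPi (σ k)) (zv k a)
  have hUjump : ∀ k (a' : Fin (k+1) → Bool), σ (k+1) ≠ σ k →
      Uq (k+1) a' ≤ mu * (zv (k+1) a' ⬝ᵥ (P (σ k) *ᵥ zv (k+1) a')) := by
    intro k a' hne
    rw [hUq]
    dsimp only
    exact jump_quad (hPmu (σ (k+1)) (σ k) hne) (zv (k+1) a')
  -- expected one-step quadratic bound, per atom
  have hEbound : ∀ k (a : Fin k → Bool),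
      pw betaBar true * Qn k a true + pw betaBar false * Qn k a false
        ≤ (if (D k a).2.2 = σ k then lam * Uq k a
            else (c * lam + (1 - betaBar) * lam) * Uq k a) := by
    intro k a
    have hpwt : pw betaBar true = betaBar := rfl
    have hpwf : pw betaBar false = 1 - betaBar := rfl
    rw [hpwt, hpwf]
    by_cases h : (D k a).2.2 = σ k
    · rw [if_pos h]
      exact hQsync k a h
    · rw [if_neg h]
      have h1 : betaBar * Qn k a true ≤ betaBar * ((1 + rhoU) * Uq k a) :=
        mul_le_mul_of_nonneg_left (hQtrue_desync k a h) hb0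
      have h2 : (1 - betaBar) * Qn k a false ≤ (1 - betaBar) * (lam * Uq k a) :=
        mul_le_mul_of_nonneg_left (hQfalse k a) (by linarith)
      have h3 : betaBar * ((1 + rhoU) * Uq k a) = c * lam * Uq k a := by
        rw [hclam]; ring
      linarith [h1, h2, h3]
  -- the switching indicator
  set sw : ℕ → Bool := fun k => decide (σ (k+1) ≠ σ k) with hsw
  -- main per-step inequality for Tt
  have hTstep : ∀ k, Tt (k+1) ≤ (if sw k then muBar * lam else lam) * Tt k := by
    intro k
    by_cases hswk : σ (k+1) = σ k
    · -- no switch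
      rw [hsw]
      rw [if_neg (by simp [hswk])]
      have hUeq : ∀ (a : Fin k → Bool) b, Uq (k+1) (Fin.snoc a b) = Qn k a b := by
        intro a b
        rw [hUq, hQn]
        dsimp only
        rw [hswk]
      -- bound Ssig (k+1)
      have hSsig1 : Ssig (k+1) ≤ lam * Ssig k + (lam * (1 - betaBar)) * Sd k := by
        have e1 : Ssig (k+1) = ∑ a : Fin k → Bool,
            ((if (D k a).2.2 = σ k then wgt k a * pw betaBar true * Qn k a true else 0)
              + wgt k a * pw betaBar false * Qn k a false) := by
          rw [hSsig]
          dsimp only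
          rw [sum_snoc_split]
          apply Finset.sum_congr rfl
          intro a _
          congr 1
          · rw [hssnocT, hswk]
            by_cases h : (D k a).2.2 = σ k
            · rw [if_pos h, if_pos h, hwsnoc, hUeq]
            · rw [if_neg h, if_neg h]
          · rw [hssnocF, hswk, if_pos rfl, hwsnoc, hUeq]
        rw [e1]
        have e2 : ∀ a : Fin k → Bool,
            (if (D k a).2.2 = σ k then wgt k a * pw betaBar true * Qn k a true else 0)
              + wgt k a * pw betaBar false * Qn k a false
            ≤ (if (D k a).2.2 = σ k then lam * (wgt k a * Uq k a)
                else (lam * (1 - betaBar)) * (wgt k a * Uq k a)) := by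
          intro a
          have hpwt : pw betaBar true = betaBar := rfl
          have hpwf : pw betaBar false = 1 - betaBar := rfl
          by_cases h : (D k a).2.2 = σ k
          · rw [if_pos h, if_pos h, hpwt, hpwf]
            calc wgt k a * betaBar * Qn k a true + wgt k a * (1 - betaBar) * Qn k a false
                = wgt k a * (betaBar * Qn k a true + (1 - betaBar) * Qn k a false) := by ring
              _ ≤ wgt k a * (lam * Uq k a) :=
                  mul_le_mul_of_nonneg_left (hQsync k a h) (hw0 k a)
              _ = lam * (wgt k a * Uq k a) := by ring
          · rw [if_neg h, if_neg h, hpwf]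
            have hwb : (0:ℝ) ≤ wgt k a * (1 - betaBar) := mul_nonneg (hw0 k a) (by linarith)
            calc 0 + wgt k a * (1 - betaBar) * Qn k a false
                = (wgt k a * (1 - betaBar)) * Qn k a false := by ring
              _ ≤ (wgt k a * (1 - betaBar)) * (lam * Uq k a) :=
                  mul_le_mul_of_nonneg_left (hQfalse k a) hwb
              _ = (lam * (1 - betaBar)) * (wgt k a * Uq k a) := by ring
        calc ∑ a : Fin k → Bool,
            ((if (D k a).2.2 = σ k then wgt k a * pw betaBar true * Qn k a true else 0)
              + wgt k a * pw betaBar false * Qn k a false)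
            ≤ ∑ a : Fin k → Bool,
              (if (D k a).2.2 = σ k then lam * (wgt k a * Uq k a)
                else (lam * (1 - betaBar)) * (wgt k a * Uq k a)) :=
              Finset.sum_le_sum fun a _ => e2 a
          _ = lam * Ssig k + (lam * (1 - betaBar)) * Sd k := by
              rw [if_sum_split (fun a => (D k a).2.2 = σ k)
                (fun a => lam * (wgt k a * Uq k a))
                (fun a => (lam * (1 - betaBar)) * (wgt k a * Uq k a))]
              rw [sum_if_mul, sum_if_mul']
      -- bound Sd (k+1)
      have hSd1 : Sd (k+1) ≤ (c * lam) * Sd k := by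
        have e1 : Sd (k+1) = ∑ a : Fin k → Bool,
            (if (D k a).2.2 = σ k then 0 else wgt k a * pw betaBar true * Qn k a true) := by
          rw [hSd]
          dsimp only
          rw [sum_snoc_split]
          apply Finset.sum_congr rfl
          intro a _
          rw [hssnocT, hssnocF, hswk, if_pos rfl, add_zero]
          by_cases h : (D k a).2.2 = σ k
          · rw [if_pos h, if_pos h]
          · rw [if_neg h, if_neg h, hwsnoc, hUeq]
        rw [e1]
        have e2 : ∀ a : Fin k → Bool,
            (if (D k a).2.2 = σ k then 0 else wgt k a * pw betaBar true * Qn k a true)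
              ≤ (if (D k a).2.2 = σ k then 0 else (c * lam) * (wgt k a * Uq k a)) := by
          intro a
          have hpwt : pw betaBar true = betaBar := rfl
          by_cases h : (D k a).2.2 = σ k
          · rw [if_pos h, if_pos h]
          · rw [if_neg h, if_neg h, hpwt]
            calc wgt k a * betaBar * Qn k a true
                = (wgt k a * betaBar) * Qn k a true := by ring
              _ ≤ (wgt k a * betaBar) * ((1 + rhoU) * Uq k a) :=
                  mul_le_mul_of_nonneg_left (hQtrue_desync k a h)
                    (mul_nonneg (hw0 k a) hb0)
              _ = (c * lam) * (wgt k a * Uq k a) := by rw [hclam]; ring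
        calc ∑ a : Fin k → Bool,
            (if (D k a).2.2 = σ k then 0 else wgt k a * pw betaBar true * Qn k a true)
            ≤ ∑ a : Fin k → Bool,
                (if (D k a).2.2 = σ k then 0 else (c * lam) * (wgt k a * Uq k a)) :=
              Finset.sum_le_sum fun a _ => e2 a
          _ = (c * lam) * Sd k := by
              rw [sum_if_mul' (fun a => (D k a).2.2 = σ k) (c * lam)
                (fun a => wgt k a * Uq k a)]
      -- combine
      rw [hTt]
      dsimp only
      have hkapSd : kap * Sd (k+1) ≤ kap * ((c * lam) * Sd k) :=
        mul_le_mul_of_nonneg_left hSd1 (by linarith)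
      have hfin : lam * Ssig k + (lam * (1 - betaBar)) * Sd k + kap * ((c * lam) * Sd k)
          ≤ lam * (Ssig k + kap * Sd k) := by
        have h1 : (lam * (1 - betaBar)) * Sd k + kap * ((c * lam) * Sd k)
            = (((1 - betaBar) + kap * c) * lam) * Sd k := by ring
        have h2 : (((1 - betaBar) + kap * c) * lam) * Sd k ≤ (kap * lam) * Sd k := by
          apply mul_le_mul_of_nonneg_right _ (hSd0 k)
          apply mul_le_mul_of_nonneg_right hkapc hlam0.le
        linarith [h1, h2]
      linarith [hSsig1, hkapSd, hfin]
    · -- switch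
      rw [hsw]
      rw [if_pos (by simp [hswk])]
      have hSum1 : Ssig (k+1) + Sd (k+1)
          ≤ mu * lam * Ssig k + mu * ((c + (1 - betaBar)) * lam) * Sd k := by
        rw [← hsplit (k+1)]
        rw [sum_snoc_split]
        have e2 : ∀ a : Fin k → Bool,
            wgt (k+1) (Fin.snoc a true) * Uq (k+1) (Fin.snoc a true)
              + wgt (k+1) (Fin.snoc a false) * Uq (k+1) (Fin.snoc a false)
            ≤ (if (D k a).2.2 = σ k then (mu * lam) * (wgt k a * Uq k a)
                else (mu * ((c + (1 - betaBar)) * lam)) * (wgt k a * Uq k a)) := by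
          intro a
          have hjt := hUjump k (Fin.snoc a true) hswk
          have hjf := hUjump k (Fin.snoc a false) hswk
          have hqt : zv (k+1) (Fin.snoc a true) ⬝ᵥ (P (σ k) *ᵥ zv (k+1) (Fin.snoc a true))
              = Qn k a true := by rw [hQn]
          have hqf : zv (k+1) (Fin.snoc a false) ⬝ᵥ (P (σ k) *ᵥ zv (k+1) (Fin.snoc a false))
              = Qn k a false := by rw [hQn]
          rw [hqt] at hjt
          rw [hqf] at hjf
          rw [hwsnoc, hwsnoc]
          have hE := hEbound k a
          have hwmu : 0 ≤ wgt k a * mu := mul_nonneg (hw0 k a) (by linarith)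
          have h1 : wgt k a * pw betaBar true * Uq (k+1) (Fin.snoc a true)
              ≤ wgt k a * pw betaBar true * (mu * Qn k a true) := by
            apply mul_le_mul_of_nonneg_left hjt
            exact mul_nonneg (hw0 k a) (pw_nonneg betaBar hb0 hb1 true)
          have h2 : wgt k a * pw betaBar false * Uq (k+1) (Fin.snoc a false)
              ≤ wgt k a * pw betaBar false * (mu * Qn k a false) := by
            apply mul_le_mul_of_nonneg_left hjf
            exact mul_nonneg (hw0 k a) (pw_nonneg betaBar hb0 hb1 false)
          have h3 : wgt k a * pw betaBar true * (mu * Qn k a true)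
              + wgt k a * pw betaBar false * (mu * Qn k a false)
              = (wgt k a * mu) * (pw betaBar true * Qn k a true
                  + pw betaBar false * Qn k a false) := by ring
          have h4 : (wgt k a * mu) * (pw betaBar true * Qn k a true
                  + pw betaBar false * Qn k a false)
              ≤ (wgt k a * mu) * (if (D k a).2.2 = σ k then lam * Uq k a
                  else (c * lam + (1 - betaBar) * lam) * Uq k a) :=
            mul_le_mul_of_nonneg_left hE hwmu
          by_cases h : (D k a).2.2 = σ k
          · rw [if_pos h]
            rw [if_pos h] at h4
            calc wgt k a * pw betaBar true * Uq (k+1) (Fin.snoc a true)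
                  + wgt k a * pw betaBar false * Uq (k+1) (Fin.snoc a false)
                ≤ wgt k a * pw betaBar true * (mu * Qn k a true)
                  + wgt k a * pw betaBar false * (mu * Qn k a false) := by linarith
              _ = (wgt k a * mu) * (pw betaBar true * Qn k a true
                  + pw betaBar false * Qn k a false) := h3
              _ ≤ (wgt k a * mu) * (lam * Uq k a) := h4
              _ = (mu * lam) * (wgt k a * Uq k a) := by ring
          · rw [if_neg h]
            rw [if_neg h] at h4
            calc wgt k a * pw betaBar true * Uq (k+1) (Fin.snoc a true)
                  + wgt k a * pw betaBar false * Uq (k+1) (Fin.snoc a false)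
                ≤ wgt k a * pw betaBar true * (mu * Qn k a true)
                  + wgt k a * pw betaBar false * (mu * Qn k a false) := by linarith
              _ = (wgt k a * mu) * (pw betaBar true * Qn k a true
                  + pw betaBar false * Qn k a false) := h3
              _ ≤ (wgt k a * mu) * ((c * lam + (1 - betaBar) * lam) * Uq k a) := h4
              _ = (mu * ((c + (1 - betaBar)) * lam)) * (wgt k a * Uq k a) := by ring
        calc ∑ a : Fin k → Bool,
              (wgt (k+1) (Fin.snoc a true) * Uq (k+1) (Fin.snoc a true)
                + wgt (k+1) (Fin.snoc a false) * Uq (k+1) (Fin.snoc a false))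
            ≤ ∑ a : Fin k → Bool,
              (if (D k a).2.2 = σ k then (mu * lam) * (wgt k a * Uq k a)
                else (mu * ((c + (1 - betaBar)) * lam)) * (wgt k a * Uq k a)) :=
              Finset.sum_le_sum fun a _ => e2 a
          _ = mu * lam * Ssig k + mu * ((c + (1 - betaBar)) * lam) * Sd k := by
              rw [if_sum_split (fun a => (D k a).2.2 = σ k)
                (fun a => (mu * lam) * (wgt k a * Uq k a))
                (fun a => (mu * ((c + (1 - betaBar)) * lam)) * (wgt k a * Uq k a))]
              rw [sum_if_mul, sum_if_mul']
      rw [hTt]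
      dsimp only
      have hstep1 : Ssig (k+1) + kap * Sd (k+1) ≤ kap * (Ssig (k+1) + Sd (k+1)) := by
        nlinarith [mul_nonneg (sub_nonneg.2 hkap1) (hSsig0 (k+1))]
      have hstep2 : kap * (Ssig (k+1) + Sd (k+1))
          ≤ kap * (mu * lam * Ssig k + mu * ((c + (1 - betaBar)) * lam) * Sd k) :=
        mul_le_mul_of_nonneg_left hSum1 (by linarith)
      have hstep3 : kap * (mu * lam * Ssig k + mu * ((c + (1 - betaBar)) * lam) * Sd k)
          ≤ muBar * lam * (Ssig k + kap * Sd k) := by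
        rw [hmuk]
        have hkm : (0:ℝ) ≤ kap * mu := mul_nonneg (by linarith) (by linarith)
        have h0 : (c + (1 - betaBar)) * lam ≤ kap * lam :=
          mul_le_mul_of_nonneg_right hkapbc hlam0.le
        have h1 : kap * (mu * ((c + (1 - betaBar)) * lam)) * Sd k
            ≤ kap * (mu * (kap * lam)) * Sd k := by
          apply mul_le_mul_of_nonneg_right _ (hSd0 k)
          calc kap * (mu * ((c + (1 - betaBar)) * lam))
              = (kap * mu) * ((c + (1 - betaBar)) * lam) := by ring
            _ ≤ (kap * mu) * (kap * lam) := mul_le_mul_of_nonneg_left h0 hkm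
            _ = kap * (mu * (kap * lam)) := by ring
        linarith [h1]
      linarith [hstep1, hstep2, hstep3]
  -- apply the decay lemma
  have hdwell' : ∀ j k, j < k → sw j = true → sw k = true → j + tauD ≤ k := by
    intro j k hjk hj hk
    rw [hsw] at hj hk
    simp only [decide_eq_true_eq] at hj hk
    exact hdwell j k hjk hj hk
  have hTtend : Tendsto Tt atTop (nhds 0) :=
    seq_decay Tt sw muBar lam tauD htau1 hlam0 hlam1 hmuBar1 htau hTt0 hTstep hdwell'
  -- lower bound for the quadratic forms
  have hεex : ∀ p : Fin m, ∃ ε > 0, ∀ z : Fin n ⊕ Fin n → ℝ,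
      ε * (z ⬝ᵥ z) ≤ z ⬝ᵥ (P p *ᵥ z) := fun p => posdef_dot_lower (hP p)
  choose εf hεf0 hεf using hεex
  set ε : ℝ := Finset.univ.inf' ⟨σ 0, Finset.mem_univ _⟩ εf with hε
  have hε0 : 0 < ε := by
    rw [hε]
    exact (Finset.lt_inf'_iff _).2 fun p _ => hεf0 p
  have hεle : ∀ p : Fin m, ε ≤ εf p := fun p =>
    Finset.inf'_le _ (Finset.mem_univ p)
  have hεall : ∀ (p : Fin m) (z : Fin n ⊕ Fin n → ℝ), ε * (z ⬝ᵥ z) ≤ z ⬝ᵥ (P p *ᵥ z) := by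
    intro p z
    calc ε * (z ⬝ᵥ z) ≤ εf p * (z ⬝ᵥ z) :=
          mul_le_mul_of_nonneg_right (hεle p) (dot_self_nonneg' z)
      _ ≤ z ⬝ᵥ (P p *ᵥ z) := hεf p z
  -- the integral identity
  have hInt : ∀ k, (∫ ω, Sum.elim (x k ω) (y k ω) ⬝ᵥ Sum.elim (x k ω) (y k ω) ∂μ)
      = ∑ a : Fin k → Bool, wgt k a * (zv k a ⬝ᵥ zv k a) := by
    intro k
    have hcongr : ∀ ω, Sum.elim (x k ω) (y k ω) ⬝ᵥ Sum.elim (x k ω) (y k ω)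
        = zv k (bitsOf β k ω) ⬝ᵥ zv k (bitsOf β k ω) := by
      intro ω
      have h := traj_corr A B K σ x0 xbar0 β hβ01 x y s hx0 hy0 hs0 hy hs hx k ω
      have h1 : x k ω = (D k (bitsOf β k ω)).1 := by
        rw [hDdef]; exact congrArg Prod.fst h
      have h2 : y k ω = (D k (bitsOf β k ω)).2.1 := by
        rw [hDdef]; exact congrArg (fun t => t.2.1) h
      rw [hzv]
      dsimp only
      rw [h1, h2]
    calc (∫ ω, Sum.elim (x k ω) (y k ω) ⬝ᵥ Sum.elim (x k ω) (y k ω) ∂μ)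
        = ∫ ω, zv k (bitsOf β k ω) ⬝ᵥ zv k (bitsOf β k ω) ∂μ := by
          apply integral_congr_ae
          filter_upwards with ω
          exact hcongr ω
      _ = ∑ a : Fin k → Bool, (∏ i, pw betaBar (a i)) * (zv k a ⬝ᵥ zv k a) :=
          integral_bits μ β hβm hβ01 hindep betaBar hb0 hb1 hβprob k
            (fun a => zv k a ⬝ᵥ zv k a)
      _ = ∑ a : Fin k → Bool, wgt k a * (zv k a ⬝ᵥ zv k a) := by rw [hwgt]
  -- the squeeze
  have hup : ∀ k, (∑ a : Fin k → Bool, wgt k a * (zv k a ⬝ᵥ zv k a)) ≤ ε⁻¹ * Tt k := by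
    intro k
    have h1 : ∀ a : Fin k → Bool, wgt k a * (zv k a ⬝ᵥ zv k a)
        ≤ wgt k a * (ε⁻¹ * Uq k a) := by
      intro a
      apply mul_le_mul_of_nonneg_left _ (hw0 k a)
      have h2 := hεall (σ k) (zv k a)
      have h3 : zv k a ⬝ᵥ zv k a = ε⁻¹ * (ε * (zv k a ⬝ᵥ zv k a)) := by
        field_simp
      rw [h3]
      apply mul_le_mul_of_nonneg_left _ (inv_nonneg.2 hε0.le)
      exact hεall (σ k) (zv k a)
    calc (∑ a : Fin k → Bool, wgt k a * (zv k a ⬝ᵥ zv k a))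
        ≤ ∑ a : Fin k → Bool, wgt k a * (ε⁻¹ * Uq k a) :=
          Finset.sum_le_sum fun a _ => h1 a
      _ = ε⁻¹ * ∑ a : Fin k → Bool, wgt k a * Uq k a := by
          rw [Finset.mul_sum]
          apply Finset.sum_congr rfl
          intro a _
          ring
      _ = ε⁻¹ * (Ssig k + Sd k) := by rw [hsplit k]
      _ ≤ ε⁻¹ * Tt k := by
          apply mul_le_mul_of_nonneg_left _ (inv_nonneg.2 hε0.le)
          rw [hTt]
          dsimp only
          nlinarith [hSd0 k, hkap1]
  have hlow : ∀ k, 0 ≤ ∑ a : Fin k → Bool, wgt k a * (zv k a ⬝ᵥ zv k a) := by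
    intro k
    apply Finset.sum_nonneg
    intro a _
    exact mul_nonneg (hw0 k a) (dot_self_nonneg' _)
  have hlim2 : Tendsto (fun k => ε⁻¹ * Tt k) atTop (nhds 0) := by
    have := hTtend.const_mul ε⁻¹
    simpa using this
  have hgoal : Tendsto (fun k => ∑ a : Fin k → Bool, wgt k a * (zv k a ⬝ᵥ zv k a))
      atTop (nhds 0) :=
    squeeze_zero hlow hup hlim2
  simp only [hInt]
  exact hgoal

end
end

section
/- (One-step expected Lyapunov decrease in the synchronous stage.) Let α, β be independent {0,1}-valued random variables with E[α] = ᾱ, E[β] = β̄, and set χ₁ = α − ᾱ + β − β̄ − αβ + ᾱβ̄ and χ₂ = α − ᾱ − αβ + ᾱβ̄. Fix x̃ ∈ ℝ^{2n} and x_a ∈ ℝⁿ with ‖x_a‖² ≤ γ̄² (γ̄ > 0), and define the random vector X⁺ = A¹x̃ + (β−β̄)A²x̃ − χ₁A³x̃ + (χ₂ + ᾱ(1−β̄))A⁴x_a. If Π ⪯ 0, then E[(X⁺)ᵀP X⁺] ≤ (1−ρ_s)·x̃ᵀP x̃ + εγ̄². -/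
open Matrix MeasureTheory ProbabilityTheory

noncomputable section

/-- Augmented block matrix `A¹ = [[A + χ₃BK, β̄BK],[χ₃I, β̄I]]` with `χ₃ = (1-ᾱ)(1-β̄)`. -/
def blkA1 (n : ℕ) (A BK : Matrix (Fin n) (Fin n) ℝ) (aB bB : ℝ) :
    Matrix (Fin n ⊕ Fin n) (Fin n ⊕ Fin n) ℝ :=
  fromBlocks (A + ((1 - aB) * (1 - bB)) • BK) (bB • BK)
    (((1 - aB) * (1 - bB)) • (1 : Matrix (Fin n) (Fin n) ℝ))
    (bB • (1 : Matrix (Fin n) (Fin n) ℝ))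

/-- `A⁴ = [[BK],[I]]` (block column). -/
def blkA4 (n : ℕ) (BK : Matrix (Fin n) (Fin n) ℝ) :
    Matrix (Fin n ⊕ Fin n) (Fin n) ℝ :=
  Matrix.of (Sum.elim (fun i => BK i) (fun i => (1 : Matrix (Fin n) (Fin n) ℝ) i))

/-- The matrix `Π` of the synchronous-stage LMI (all cross terms symmetrized). -/
def PiMat (n : ℕ) (A BK : Matrix (Fin n) (Fin n) ℝ)
    (P : Matrix (Fin n ⊕ Fin n) (Fin n ⊕ Fin n) ℝ) (aB bB eps rhoS : ℝ) :
    Matrix ((Fin n ⊕ Fin n) ⊕ Fin n) ((Fin n ⊕ Fin n) ⊕ Fin n) ℝ :=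
  let aT : ℝ := aB * (1 - aB)
  let bT : ℝ := bB * (1 - bB)
  let A1 := blkA1 n A BK aB bB
  let A2 := blkA2 n BK
  let A3 := blkA3 n BK
  let A4 := blkA4 n BK
  let Pi11 : Matrix (Fin n ⊕ Fin n) (Fin n ⊕ Fin n) ℝ :=
    A1ᵀ * P * A1 + bT • (A2ᵀ * P * A2) - (1 - rhoS) • P
      + (aT * (1 - bB) ^ 2 + bT * (1 - aB) ^ 2 + aT * bT) • (A3ᵀ * P * A3)
      - (bT * (1 - aB)) • (A2ᵀ * P * A3 + A3ᵀ * P * A2)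
  let Pi12 : Matrix (Fin n ⊕ Fin n) (Fin n) ℝ :=
    (aB * (1 - bB)) • (A1ᵀ * P * A4) - (aB * bT) • (A2ᵀ * P * A4)
      - (aT * (1 - bB) ^ 2) • (A3ᵀ * P * A4)
  let Pi22 : Matrix (Fin n) (Fin n) ℝ :=
    (aB * (1 - bB)) • (A4ᵀ * P * A4) - eps • (1 : Matrix (Fin n) (Fin n) ℝ)
  fromBlocks Pi11 Pi12 Pi12ᵀ Pi22

private lemma quadForm_eq {l₁ l₂ l₃ : Type*} [Fintype l₁] [Fintype l₂] [Fintype l₃]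
    (M : Matrix l₂ l₁ ℝ) (Pm : Matrix l₂ l₂ ℝ) (N : Matrix l₂ l₃ ℝ)
    (x : l₁ → ℝ) (y : l₃ → ℝ) :
    x ⬝ᵥ ((Mᵀ * (Pm * N)) *ᵥ y) = (M *ᵥ x) ⬝ᵥ (Pm *ᵥ (N *ᵥ y)) := by
  rw [← mulVec_mulVec, ← mulVec_mulVec, dotProduct_mulVec, vecMul_transpose]

/-- One-step expected Lyapunov decrease in the synchronous stage:
with `χ₁ = α - ᾱ + β - β̄ - αβ + ᾱβ̄`, `χ₂ = α - ᾱ - αβ + ᾱβ̄`, the random vector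
`X⁺ = A¹x̃ + (β-β̄)A²x̃ - χ₁A³x̃ + (χ₂ + ᾱ(1-β̄))A⁴x_a` satisfies
`E[(X⁺)ᵀPX⁺] ≤ (1-ρₛ) x̃ᵀPx̃ + εγ̄²` provided `Π ⪯ 0` and `‖x_a‖² ≤ γ̄²`. -/
theorem stmt13 (n r : ℕ) (A : Matrix (Fin n) (Fin n) ℝ) (B : Matrix (Fin n) (Fin r) ℝ)
    (K : Matrix (Fin r) (Fin n) ℝ)
    {Ω : Type*} [MeasurableSpace Ω] (μ : Measure Ω) [IsProbabilityMeasure μ]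
    (α β : Ω → ℝ) (hαm : Measurable α) (hβm : Measurable β)
    (hα01 : ∀ ω, α ω = 0 ∨ α ω = 1) (hβ01 : ∀ ω, β ω = 0 ∨ β ω = 1)
    (hind : IndepFun α β μ)
    (alphaBar betaBar : ℝ)
    (hαmean : ∫ ω, α ω ∂μ = alphaBar) (hβmean : ∫ ω, β ω ∂μ = betaBar)
    (χ₁ χ₂ : Ω → ℝ)
    (hχ₁ : ∀ ω, χ₁ ω = α ω - alphaBar + β ω - betaBar - α ω * β ω + alphaBar * betaBar)
    (hχ₂ : ∀ ω, χ₂ ω = α ω - alphaBar - α ω * β ω + alphaBar * betaBar)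
    (P : Matrix (Fin n ⊕ Fin n) (Fin n ⊕ Fin n) ℝ) (hP : P.PosDef)
    (eps rhoS gammaBar : ℝ) (heps : 0 < eps) (hrhoS : 0 < rhoS ∧ rhoS < 1)
    (hgamma : 0 < gammaBar)
    (xt : Fin n ⊕ Fin n → ℝ) (xa : Fin n → ℝ) (hxa : xa ⬝ᵥ xa ≤ gammaBar ^ 2)
    (hPi : SymNegSemidef (PiMat n A (B * K) P alphaBar betaBar eps rhoS))
    (Xplus : Ω → Fin n ⊕ Fin n → ℝ)
    (hXplus : ∀ ω, Xplus ω
      = blkA1 n A (B * K) alphaBar betaBar *ᵥ xt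
        + (β ω - betaBar) • (blkA2 n (B * K) *ᵥ xt)
        - χ₁ ω • (blkA3 n (B * K) *ᵥ xt)
        + (χ₂ ω + alphaBar * (1 - betaBar)) • (blkA4 n (B * K) *ᵥ xa)) :
    ∫ ω, Xplus ω ⬝ᵥ (P *ᵥ Xplus ω) ∂μ
      ≤ (1 - rhoS) * (xt ⬝ᵥ (P *ᵥ xt)) + eps * gammaBar ^ 2 := by
  obtain ⟨hρ0, hρ1⟩ := hrhoS
  -- abbreviations for the four vectors
  set w1 : Fin n ⊕ Fin n → ℝ := blkA1 n A (B * K) alphaBar betaBar *ᵥ xt with hw1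
  set w2 : Fin n ⊕ Fin n → ℝ := blkA2 n (B * K) *ᵥ xt with hw2
  set w3 : Fin n ⊕ Fin n → ℝ := blkA3 n (B * K) *ᵥ xt with hw3
  set w4 : Fin n ⊕ Fin n → ℝ := blkA4 n (B * K) *ᵥ xa with hw4
  -- symmetry of P
  have hPt : Pᵀ = P := by
    have h := hP.1
    ext i j
    exact congrFun (congrFun h i) j
  have hsym : ∀ x y : Fin n ⊕ Fin n → ℝ, x ⬝ᵥ (P *ᵥ y) = y ⬝ᵥ (P *ᵥ x) := by
    intro x y
    rw [dotProduct_mulVec, ← hPt, vecMul_transpose, hPt, dotProduct_comm]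
  -- the quadratic form as a function of the values of α and β
  set Gq : ℝ → ℝ → ℝ := fun t u =>
    (w1 + (u - betaBar) • w2 - (t - alphaBar + u - betaBar - t * u + alphaBar * betaBar) • w3
        + (t - alphaBar - t * u + alphaBar * betaBar + alphaBar * (1 - betaBar)) • w4) ⬝ᵥ
      (P *ᵥ (w1 + (u - betaBar) • w2
        - (t - alphaBar + u - betaBar - t * u + alphaBar * betaBar) • w3
        + (t - alphaBar - t * u + alphaBar * betaBar + alphaBar * (1 - betaBar)) • w4))
    with hGq
  have hQ : ∀ ω, Xplus ω ⬝ᵥ (P *ᵥ Xplus ω) = Gq (α ω) (β ω) := by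
    intro ω
    rw [hXplus ω, hχ₁ ω, hχ₂ ω]
  -- pointwise multilinear decomposition in α, β, αβ
  have key : ∀ ω, Xplus ω ⬝ᵥ (P *ᵥ Xplus ω)
      = Gq 0 0 + (Gq 1 0 - Gq 0 0) * α ω + (Gq 0 1 - Gq 0 0) * β ω
        + (Gq 0 0 - Gq 1 0 - Gq 0 1 + Gq 1 1) * (α ω * β ω) := by
    intro ω
    rw [hQ ω]
    rcases hα01 ω with h | h <;> rcases hβ01 ω with h' | h' <;> rw [h, h'] <;> ring
  -- integrability
  have iα : Integrable α μ := by
    refine (integrable_const (1 : ℝ)).mono' hαm.aestronglyMeasurable (ae_of_all μ ?_)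
    intro ω; rcases hα01 ω with h | h <;> simp [h]
  have iβ : Integrable β μ := by
    refine (integrable_const (1 : ℝ)).mono' hβm.aestronglyMeasurable (ae_of_all μ ?_)
    intro ω; rcases hβ01 ω with h | h <;> simp [h]
  have iαβ : Integrable (fun ω => α ω * β ω) μ := by
    refine (integrable_const (1 : ℝ)).mono' (hαm.mul hβm).aestronglyMeasurable (ae_of_all μ ?_)
    intro ω; rcases hα01 ω with h | h <;> rcases hβ01 ω with h' | h' <;> simp [h, h']
  have hEαβ : ∫ ω, α ω * β ω ∂μ = alphaBar * betaBar := by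
    rw [← hαmean, ← hβmean]
    exact IndepFun.integral_fun_mul_eq_mul_integral hind hαm.aestronglyMeasurable hβm.aestronglyMeasurable
  -- compute the integral
  have hInt : ∫ ω, Xplus ω ⬝ᵥ (P *ᵥ Xplus ω) ∂μ
      = Gq 0 0 + (Gq 1 0 - Gq 0 0) * alphaBar + (Gq 0 1 - Gq 0 0) * betaBar
        + (Gq 0 0 - Gq 1 0 - Gq 0 1 + Gq 1 1) * (alphaBar * betaBar) := by
    have ic : Integrable (fun _ : Ω => Gq 0 0) μ := integrable_const _
    have i1 : Integrable (fun ω => (Gq 1 0 - Gq 0 0) * α ω) μ := iα.const_mul _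
    have i2 : Integrable (fun ω => (Gq 0 1 - Gq 0 0) * β ω) μ := iβ.const_mul _
    have i3 : Integrable (fun ω => (Gq 0 0 - Gq 1 0 - Gq 0 1 + Gq 1 1) * (α ω * β ω)) μ :=
      iαβ.const_mul _
    have i12 : Integrable (fun ω => Gq 0 0 + (Gq 1 0 - Gq 0 0) * α ω) μ := ic.add i1
    have i123 : Integrable
        (fun ω => Gq 0 0 + (Gq 1 0 - Gq 0 0) * α ω + (Gq 0 1 - Gq 0 0) * β ω) μ := i12.add i2
    rw [integral_congr_ae (ae_of_all μ key)]
    rw [integral_add i123 i3, integral_add i12 i2, integral_add ic i1,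
      integral_const, integral_const_mul, integral_const_mul, integral_const_mul, hαmean, hβmean,
      hEαβ]
    simp
  -- the Π quadratic form bound
  set z : (Fin n ⊕ Fin n) ⊕ Fin n → ℝ := Sum.elim xt xa with hz
  have hzq : z ⬝ᵥ (PiMat n A (B * K) P alphaBar betaBar eps rhoS *ᵥ z) ≤ 0 := by
    have h := hPi.dotProduct_mulVec_nonneg z
    rw [star_trivial, neg_mulVec, dotProduct_neg, smul_mulVec, dotProduct_smul,
      add_mulVec, dotProduct_add, mulVec_transpose, dotProduct_comm z (z ᵥ* _),
      ← dotProduct_mulVec] at h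
    simp only [smul_eq_mul] at h
    linarith
  -- the key algebraic identity
  have hD : Gq 0 0 + (Gq 1 0 - Gq 0 0) * alphaBar + (Gq 0 1 - Gq 0 0) * betaBar
      + (Gq 0 0 - Gq 1 0 - Gq 0 1 + Gq 1 1) * (alphaBar * betaBar)
      = z ⬝ᵥ (PiMat n A (B * K) P alphaBar betaBar eps rhoS *ᵥ z)
        + (1 - rhoS) * (xt ⬝ᵥ (P *ᵥ xt)) + eps * (xa ⬝ᵥ xa) := by
    simp only [hGq, hz, PiMat]
    simp only [transpose_sub, transpose_smul, transpose_mul, transpose_transpose, hPt,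
      Matrix.mul_assoc]
    simp only [fromBlocks_mulVec, Sum.elim_comp_inl, Sum.elim_comp_inr,
      sumElim_dotProduct_sumElim, add_mulVec, sub_mulVec, smul_mulVec, one_mulVec,
      mulVec_add, mulVec_sub, mulVec_smul, dotProduct_add, dotProduct_sub, add_dotProduct,
      sub_dotProduct, dotProduct_smul, smul_dotProduct, smul_eq_mul, quadForm_eq]
    rw [← hw1, ← hw2, ← hw3, ← hw4]
    simp only [hsym w2 w1, hsym w3 w1, hsym w3 w2, hsym w4 w1, hsym w4 w2, hsym w4 w3]
    ring
  -- conclude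
  rw [hInt, hD]
  have h1 : eps * (xa ⬝ᵥ xa) ≤ eps * gammaBar ^ 2 :=
    mul_le_mul_of_nonneg_left hxa heps.le
  linarith

end
end

section
/- (One-step expected Lyapunov decrease at the first successful transmission after a switch.) Let α be a {0,1}-valued random variable with E[α] = ᾱ. Fix x̃ ∈ ℝ^{2n} and x_a ∈ ℝⁿ with ‖x_a‖² ≤ γ̄² (γ̄ > 0), and define the random vector X⁺ = Ã¹x̃ − (α−ᾱ)Ã²x̃ + α·Ã³x_a. If Ψ ⪯ 0, then E[(X⁺)ᵀP X⁺] ≤ (1−ρ_s)·x̃ᵀP x̃ + εγ̄². -/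
open Matrix MeasureTheory ProbabilityTheory

noncomputable section

/-- `Ã¹ = [[A + (1-ᾱ)BK, 0],[(1-ᾱ)I, 0]]`. -/
def blkAt1 (n : ℕ) (A BK : Matrix (Fin n) (Fin n) ℝ) (aB : ℝ) :
    Matrix (Fin n ⊕ Fin n) (Fin n ⊕ Fin n) ℝ :=
  fromBlocks (A + (1 - aB) • BK) 0 ((1 - aB) • (1 : Matrix (Fin n) (Fin n) ℝ)) 0

/-- `Ã² = [[BK, 0],[I, 0]]`. -/
def blkAt2 (n : ℕ) (BK : Matrix (Fin n) (Fin n) ℝ) :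
    Matrix (Fin n ⊕ Fin n) (Fin n ⊕ Fin n) ℝ :=
  fromBlocks BK 0 (1 : Matrix (Fin n) (Fin n) ℝ) 0

/-- `Ã³ = [[BK],[I]]` (block column). -/
def blkAt3 (n : ℕ) (BK : Matrix (Fin n) (Fin n) ℝ) :
    Matrix (Fin n ⊕ Fin n) (Fin n) ℝ :=
  Matrix.of (Sum.elim (fun i => BK i) (fun i => (1 : Matrix (Fin n) (Fin n) ℝ) i))

/-- The matrix `Ψ` of the resynchronization LMI. -/
def PsiMat (n : ℕ) (A BK : Matrix (Fin n) (Fin n) ℝ)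
    (P : Matrix (Fin n ⊕ Fin n) (Fin n ⊕ Fin n) ℝ) (aB eps rhoS : ℝ) :
    Matrix ((Fin n ⊕ Fin n) ⊕ Fin n) ((Fin n ⊕ Fin n) ⊕ Fin n) ℝ :=
  let aT : ℝ := aB * (1 - aB)
  let At1 := blkAt1 n A BK aB
  let At2 := blkAt2 n BK
  let At3 := blkAt3 n BK
  let Psi11 : Matrix (Fin n ⊕ Fin n) (Fin n ⊕ Fin n) ℝ :=
    At1ᵀ * P * At1 + aT • (At2ᵀ * P * At2) - (1 - rhoS) • P
  let Psi12 : Matrix (Fin n ⊕ Fin n) (Fin n) ℝ :=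
    aB • (At1ᵀ * P * At3) - aT • (At2ᵀ * P * At3)
  let Psi22 : Matrix (Fin n) (Fin n) ℝ :=
    (aT + aB ^ 2) • (At3ᵀ * P * At3) - eps • (1 : Matrix (Fin n) (Fin n) ℝ)
  fromBlocks Psi11 Psi12 Psi12ᵀ Psi22

lemma dotTrans {k m : Type*} [Fintype k] [Fintype m] (M : Matrix k m ℝ) (x : m → ℝ)
    (y : k → ℝ) : x ⬝ᵥ (Mᵀ *ᵥ y) = y ⬝ᵥ (M *ᵥ x) := by
  rw [dotProduct_mulVec, vecMul_transpose, dotProduct_comm]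

lemma quadAux {k m₁ m₂ : Type*} [Fintype k] [Fintype m₁] [Fintype m₂]
    (P : Matrix k k ℝ) (M : Matrix k m₁ ℝ) (N : Matrix k m₂ ℝ)
    (x : m₁ → ℝ) (y : m₂ → ℝ) :
    x ⬝ᵥ ((Mᵀ * P * N) *ᵥ y) = (M *ᵥ x) ⬝ᵥ (P *ᵥ (N *ᵥ y)) := by
  rw [← mulVec_mulVec, ← mulVec_mulVec, dotProduct_mulVec, vecMul_transpose]

/-- One-step expected Lyapunov decrease at the first successful
transmission after a switch: with `X⁺ = Ã¹x̃ - (α-ᾱ)Ã²x̃ + α Ã³x_a`, if `Ψ ⪯ 0` and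
`‖x_a‖² ≤ γ̄²` then `E[(X⁺)ᵀPX⁺] ≤ (1-ρₛ) x̃ᵀPx̃ + εγ̄²`. -/
theorem stmt14 (n r : ℕ) (A : Matrix (Fin n) (Fin n) ℝ) (B : Matrix (Fin n) (Fin r) ℝ)
    (K : Matrix (Fin r) (Fin n) ℝ)
    {Ω : Type*} [MeasurableSpace Ω] (μ : Measure Ω) [IsProbabilityMeasure μ]
    (α : Ω → ℝ) (hαm : Measurable α) (hα01 : ∀ ω, α ω = 0 ∨ α ω = 1)
    (alphaBar : ℝ) (hαmean : ∫ ω, α ω ∂μ = alphaBar)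
    (P : Matrix (Fin n ⊕ Fin n) (Fin n ⊕ Fin n) ℝ) (hP : P.PosDef)
    (eps rhoS gammaBar : ℝ) (heps : 0 < eps) (hrhoS : 0 < rhoS ∧ rhoS < 1)
    (hgamma : 0 < gammaBar)
    (xt : Fin n ⊕ Fin n → ℝ) (xa : Fin n → ℝ) (hxa : xa ⬝ᵥ xa ≤ gammaBar ^ 2)
    (hPsi : SymNegSemidef (PsiMat n A (B * K) P alphaBar eps rhoS))
    (Xplus : Ω → Fin n ⊕ Fin n → ℝ)
    (hXplus : ∀ ω, Xplus ω
      = blkAt1 n A (B * K) alphaBar *ᵥ xt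
        - (α ω - alphaBar) • (blkAt2 n (B * K) *ᵥ xt)
        + α ω • (blkAt3 n (B * K) *ᵥ xa)) :
    ∫ ω, Xplus ω ⬝ᵥ (P *ᵥ Xplus ω) ∂μ
      ≤ (1 - rhoS) * (xt ⬝ᵥ (P *ᵥ xt)) + eps * gammaBar ^ 2 := by
  obtain ⟨hr0, hr1⟩ := hrhoS
  have hPsym : Pᵀ = P := hP.isHermitian.eq
  set At1 := blkAt1 n A (B * K) alphaBar with hAt1
  set At2 := blkAt2 n (B * K) with hAt2
  set At3 := blkAt3 n (B * K) with hAt3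
  set v1 : Fin n ⊕ Fin n → ℝ := At1 *ᵥ xt with hv1
  set v2 : Fin n ⊕ Fin n → ℝ := At2 *ᵥ xt with hv2
  set v3 : Fin n ⊕ Fin n → ℝ := At3 *ᵥ xa with hv3
  have qsymm : ∀ x y : Fin n ⊕ Fin n → ℝ, x ⬝ᵥ (P *ᵥ y) = y ⬝ᵥ (P *ᵥ x) := by
    intro x y
    rw [dotProduct_mulVec x P y, ← mulVec_transpose, hPsym, dotProduct_comm]
  set c0 : ℝ := v1 ⬝ᵥ (P *ᵥ v1) + 2 * alphaBar * (v1 ⬝ᵥ (P *ᵥ v2))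
      + alphaBar ^ 2 * (v2 ⬝ᵥ (P *ᵥ v2)) with hc0
  set c1 : ℝ := 2 * (v1 ⬝ᵥ (P *ᵥ v3)) - 2 * (v1 ⬝ᵥ (P *ᵥ v2))
      + 2 * alphaBar * (v2 ⬝ᵥ (P *ᵥ v3)) - 2 * alphaBar * (v2 ⬝ᵥ (P *ᵥ v2))
      + (v3 ⬝ᵥ (P *ᵥ v3)) - 2 * (v2 ⬝ᵥ (P *ᵥ v3)) + (v2 ⬝ᵥ (P *ᵥ v2)) with hc1
  have hpt : ∀ ω, Xplus ω ⬝ᵥ (P *ᵥ Xplus ω) = c0 + c1 * α ω := by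
    intro ω
    rcases hα01 ω with h | h <;>
    · rw [hXplus ω, h]
      simp only [mulVec_add, mulVec_sub, mulVec_smul, dotProduct_add, add_dotProduct,
        dotProduct_sub, sub_dotProduct, dotProduct_smul, smul_dotProduct, smul_eq_mul,
        hc0, hc1]
      rw [qsymm v2 v1, qsymm v3 v1, qsymm v3 v2]
      ring
  have hαint : Integrable α μ := by
    refine (integrable_const (1:ℝ)).mono' hαm.aestronglyMeasurable ?_
    filter_upwards with ω
    rcases hα01 ω with h | h <;> simp [h]
  have hint : ∫ ω, Xplus ω ⬝ᵥ (P *ᵥ Xplus ω) ∂μ = c0 + c1 * alphaBar := by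
    rw [integral_congr_ae (Filter.Eventually.of_forall hpt),
      integral_add (integrable_const _) (hαint.const_mul c1), integral_const,
      integral_const_mul, hαmean]
    simp
  rw [hint]
  -- LMI consequence
  have hz := Matrix.PosSemidef.dotProduct_mulVec_nonneg hPsi (Sum.elim xt xa)
  set Ψ := PsiMat n A (B * K) P alphaBar eps rhoS with hΨ
  have hzz : Sum.elim xt xa ⬝ᵥ (Ψ *ᵥ Sum.elim xt xa) ≤ 0 := by
    have ht : Sum.elim xt xa ⬝ᵥ (Ψᵀ *ᵥ Sum.elim xt xa)
        = Sum.elim xt xa ⬝ᵥ (Ψ *ᵥ Sum.elim xt xa) := by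
      rw [dotProduct_mulVec, vecMul_transpose, dotProduct_comm, dotProduct_mulVec,
        ← mulVec_transpose]
    simp only [star_trivial, neg_smul, neg_mulVec, dotProduct_neg, smul_mulVec,
      dotProduct_smul, add_mulVec, dotProduct_add, ht, smul_eq_mul] at hz
    linarith
  have hexpand : Sum.elim xt xa ⬝ᵥ (Ψ *ᵥ Sum.elim xt xa)
      = c0 + c1 * alphaBar - (1 - rhoS) * (xt ⬝ᵥ (P *ᵥ xt)) - eps * (xa ⬝ᵥ xa) := by
    rw [hΨ]
    simp only [PsiMat, ← hAt1, ← hAt2, ← hAt3]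
    rw [fromBlocks_mulVec]
    rw [sumElim_dotProduct_sumElim]
    simp only [mulVec_add, mulVec_sub, smul_mulVec, sub_mulVec, add_mulVec,
      dotProduct_add, dotProduct_sub, dotProduct_smul, smul_eq_mul,
      quadAux, one_mulVec]
    simp only [Sum.elim_comp_inl, Sum.elim_comp_inr, transpose_sub, transpose_smul,
      sub_mulVec, smul_mulVec, dotProduct_sub, dotProduct_smul, smul_eq_mul,
      dotTrans, quadAux]
    rw [← hv1, ← hv2, ← hv3, hc0, hc1]
    ring
  linarith [mul_le_mul_of_nonneg_left hxa heps.le]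

end
end
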